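/- Suppose that for each v ∈ W an element m_v ∈ ℤ[X] is given such that the coefficient of e^{e_v} in m_v equals 1 and the support of m_v is contained in {μ ∈ X : μ ≤_a e_v}. Then the family {m_v : v ∈ W} generates ℤ[X] as a module over the invariant subring ℤ[X]^W. In particular, taking m_v = e^{e_v}, the elements e^{e_v} (v ∈ W) generate ℤ[X] as a ℤ[X]^W-module (Steinberg's theorem). -/

import Mathlib

open scoped InnerProductSpace Classical

noncomputable section

/-- A reduced crystallographic root system `Φ` spanning a finite-dimensional real inner
product space `V`, together with a choice of simple roots `π` (determining the positive
system), the corresponding fundamental weights `ω`, the reflections `s`, the Weyl group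
`W` and the weight lattice `X`. -/
structure RootSystemData (V : Type) [NormedAddCommGroup V] [InnerProductSpace ℝ V]
    [FiniteDimensional ℝ V] where
  /-- the (finite) set of roots -/
  Φ : Finset V
  /-- the rank -/
  r : ℕ
  /-- the simple roots `α₁, …, α_r` -/
  π : Fin r → V
  /-- the fundamental weights `ω₁, …, ω_r` -/
  ω : Fin r → V
  /-- the orthogonal reflection attached to a root -/
  s : V → (V ≃ₗ[ℝ] V)
  /-- the Weyl group -/
  W : Subgroup (V ≃ₗ[ℝ] V)
  /-- the weight lattice -/
  X : AddSubgroup V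
  root_ne_zero : ∀ α ∈ Φ, α ≠ (0 : V)
  root_span : Submodule.span ℝ (Φ : Set V) = ⊤
  reduced : ∀ α ∈ Φ, ∀ c : ℝ, c • α ∈ Φ → c = 1 ∨ c = -1
  crystallographic : ∀ α ∈ Φ, ∀ β ∈ Φ, ∃ n : ℤ, 2 * ⟪β, α⟫_ℝ / ⟪α, α⟫_ℝ = (n : ℝ)
  s_apply : ∀ α ∈ Φ, ∀ v : V, s α v = v - (2 * ⟪v, α⟫_ℝ / ⟪α, α⟫_ℝ) • α
  refl_stable : ∀ α ∈ Φ, ∀ β ∈ Φ, s α β ∈ Φ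
  W_eq : W = Subgroup.closure {g : V ≃ₗ[ℝ] V | ∃ α ∈ Φ, g = s α}
  inner_invariant : ∀ g ∈ W, ∀ u v : V, ⟪g u, g v⟫_ℝ = ⟪u, v⟫_ℝ
  simple_mem : ∀ i, π i ∈ Φ
  simple_indep : LinearIndependent ℝ π
  pos_or_neg : ∀ α ∈ Φ,
      (∃ c : Fin r → ℝ, (∀ i, 0 ≤ c i) ∧ α = ∑ i, c i • π i) ∨
      (∃ c : Fin r → ℝ, (∀ i, 0 ≤ c i) ∧ -α = ∑ i, c i • π i)
  fund : ∀ i j, 2 * ⟪ω i, π j⟫_ℝ / ⟪π j, π j⟫_ℝ = if i = j then (1 : ℝ) else 0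
  X_eq : X = AddSubgroup.closure (Set.range ω)
  X_stable : ∀ g ∈ W, ∀ x ∈ X, g x ∈ X

/-- The pairing `(v, α∨) = 2(v,α)/(α,α)` of a vector with the coroot of `α`. -/
def pairing {V : Type} [NormedAddCommGroup V] [InnerProductSpace ℝ V]
    (v α : V) : ℝ := 2 * ⟪v, α⟫_ℝ / ⟪α, α⟫_ℝ

namespace RootSystemData

variable {V : Type} [NormedAddCommGroup V] [InnerProductSpace ℝ V] [FiniteDimensional ℝ V]
variable (C : RootSystemData V)

/-- `α` is a nonnegative combination of the simple roots (a positive root, if `α ∈ Φ`). -/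
def IsPos (α : V) : Prop := ∃ c : Fin C.r → ℝ, (∀ i, 0 ≤ c i) ∧ α = ∑ i, c i • C.π i

/-- `α` is a nonpositive combination of the simple roots (a negative root, if `α ∈ Φ`). -/
def IsNeg (α : V) : Prop := C.IsPos (-α)

/-- A weight is dominant if it pairs nonnegatively with all simple coroots. -/
def IsDominant (lam : V) : Prop := ∀ i, 0 ≤ pairing lam (C.π i)

/-- The product of the simple reflections along a word. -/
def wordProd (l : List (Fin C.r)) : V ≃ₗ[ℝ] V := (l.map fun i => C.s (C.π i)).prod

/-- The length of `w`: the least length of an expression of `w` as a product of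
simple reflections. -/
def length (w : V ≃ₗ[ℝ] V) : ℕ :=
  sInf {n | ∃ l : List (Fin C.r), l.length = n ∧ C.wordProd l = w}

/-- The (strong) Bruhat order on the Weyl group: `u ≤ v` iff `v` is obtained from `u`
by successively multiplying by reflections, increasing the length at each step. -/
def BruhatLE (u v : V ≃ₗ[ℝ] V) : Prop :=
  Relation.ReflTransGen
    (fun a b => (∃ α ∈ C.Φ, b = a * C.s α) ∧ C.length a < C.length b) u v

/-- The Steinberg weight `e_v = v⁻¹ ⬝ ∑_{i : v⁻¹ α_i < 0} ω_i`. -/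
def steinberg (v : V ≃ₗ[ℝ] V) : V :=
  v⁻¹ (∑ i ∈ Finset.univ.filter (fun i => C.IsNeg (v⁻¹ (C.π i))), C.ω i)

/-- The excellent order on weights: `λ ≤ₑ μ` iff `(λ,λ) < (μ,μ)`, or `λ = wν`, `μ = zν`
for some dominant `ν ∈ X` and `w ≤ z` in the Bruhat order. -/
def ExcLE (lam mu : V) : Prop :=
  ⟪lam, lam⟫_ℝ < ⟪mu, mu⟫_ℝ ∨
    ∃ nu ∈ C.X, C.IsDominant nu ∧
      ∃ w ∈ C.W, ∃ z ∈ C.W, C.BruhatLE w z ∧ lam = w nu ∧ mu = z nu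

/-- The strict excellent order. -/
def ExcLT (lam mu : V) : Prop := C.ExcLE lam mu ∧ lam ≠ mu

/-- The antipodal excellent order: `λ ≤ₐ μ` iff `-λ ≤ₑ -μ`. -/
def AntiLE (lam mu : V) : Prop := C.ExcLE (-lam) (-mu)

/-- The strict antipodal excellent order. -/
def AntiLT (lam mu : V) : Prop := C.AntiLE lam mu ∧ lam ≠ mu

/-- The dominance order: `μ ≤_d ν` iff `ν - μ` is a nonnegative integer combination of
the positive roots. -/
def DomLE (mu nu : V) : Prop :=
  ∃ c : V → ℕ, nu - mu = ∑ α ∈ C.Φ.filter (fun a => C.IsPos a), (c α : ℝ) • α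

theorem omega_mem (i : Fin C.r) : C.ω i ∈ C.X := by
  rw [C.X_eq]; exact AddSubgroup.subset_closure ⟨i, rfl⟩

theorem steinberg_mem {v : V ≃ₗ[ℝ] V} (hv : v ∈ C.W) : C.steinberg v ∈ C.X :=
  C.X_stable _ (inv_mem hv) _ (AddSubgroup.sum_mem _ fun i _ => C.omega_mem i)

/-- The group ring `ℤ[X]` of the weight lattice. -/
abbrev GroupRing := AddMonoidAlgebra ℤ ↥C.X

/-- The basis element `e^λ` of `ℤ[X]`. -/
def expo (x : V) (hx : x ∈ C.X) : C.GroupRing := AddMonoidAlgebra.single ⟨x, hx⟩ 1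

/-- `e^λ`, defined for all `λ : V` (and zero off the lattice). -/
def expoOf (x : V) : C.GroupRing := if hx : x ∈ C.X then C.expo x hx else 0

/-- The coefficient of `e^x` in an element of `ℤ[X]`. -/
def coeff (m : C.GroupRing) (x : ↥C.X) : ℤ := m.coeff x

/-- The support of an element of `ℤ[X]`. -/
def supp (m : C.GroupRing) : Finset ↥C.X := m.coeff.support

/-- The action of `g ∈ W` on the weight lattice. -/
def actX (g : V ≃ₗ[ℝ] V) (hg : g ∈ C.W) : ↥C.X → ↥C.X :=
  fun x => ⟨g x, C.X_stable g hg x.1 x.2⟩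

/-- The action of `g ∈ W` on `ℤ[X]`, with `e^λ ↦ e^{gλ}`. -/
def wAct (g : V ≃ₗ[ℝ] V) (hg : g ∈ C.W) (m : C.GroupRing) : C.GroupRing :=
  AddMonoidAlgebra.ofCoeff (Finsupp.mapDomain (C.actX g hg) m.coeff)

/-- `m` lies in the invariant subring `ℤ[X]^W`. -/
def IsWInvariant (m : C.GroupRing) : Prop := ∀ g (hg : g ∈ C.W), C.wAct g hg m = m

/-- The parabolic subgroup `W_{Π'}` generated by the simple reflections `s_α, α ∈ Π'`,
for a subset `Π'` of the simple roots (given by a subset `J` of the index set). -/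
def parabolicSubgroup (J : Set (Fin C.r)) : Subgroup (V ≃ₗ[ℝ] V) :=
  Subgroup.closure {g | ∃ i ∈ J, g = C.s (C.π i)}

theorem parabolic_le (J : Set (Fin C.r)) : C.parabolicSubgroup J ≤ C.W := by
  refine (Subgroup.closure_le _).2 ?_
  rintro g ⟨i, _, rfl⟩
  rw [C.W_eq]
  exact Subgroup.subset_closure ⟨C.π i, C.simple_mem i, rfl⟩

/-- `m` lies in the invariant subring `ℤ[X]^H` for a subgroup `H ≤ W`. -/
def IsInvariantUnder (H : Subgroup (V ≃ₗ[ℝ] V)) (hH : H ≤ C.W) (m : C.GroupRing) : Prop :=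
  ∀ g (hg : g ∈ H), C.wAct g (hH hg) m = m

/-- `v` is of minimal length in its coset `v ⬝ W_{Π'}`. -/
def IsMinCosetRep (J : Set (Fin C.r)) (v : V ≃ₗ[ℝ] V) : Prop :=
  v ∈ C.W ∧ ∀ z ∈ C.parabolicSubgroup J, C.length v ≤ C.length (v * z)

/-- The subgroup generated by the simple reflections fixing a given vector. -/
def fixSubgroup (x : V) : Subgroup (V ≃ₗ[ℝ] V) :=
  Subgroup.closure {g | ∃ i : Fin C.r, C.s (C.π i) x = x ∧ g = C.s (C.π i)}

end RootSystemData


set_option linter.unusedSectionVars false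
set_option linter.unusedVariables false
set_option maxHeartbeats 1000000

namespace RootSystemData
section


variable {V : Type} [NormedAddCommGroup V] [InnerProductSpace ℝ V] [FiniteDimensional ℝ V]
variable (C : RootSystemData V)

/-! ### pairing basics -/

theorem pairing_add (x y α : V) : pairing (x + y) α = pairing x α + pairing y α := by
  simp [pairing, inner_add_left, mul_add, add_div]

theorem pairing_smul (c : ℝ) (x α : V) : pairing (c • x) α = c * pairing x α := by
  simp [pairing, inner_smul_left, mul_div_assoc]; ring

theorem pairing_neg (x α : V) : pairing (-x) α = - pairing x α := by
  simp [pairing, inner_neg_left, neg_div]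

theorem pairing_sub (x y α : V) : pairing (x - y) α = pairing x α - pairing y α := by
  simp [pairing, inner_sub_left, sub_div, mul_sub]

theorem pairing_zero (α : V) : pairing (0:V) α = 0 := by simp [pairing]

theorem pairing_sum {ι : Type*} (s : Finset ι) (f : ι → V) (α : V) :
    pairing (∑ i ∈ s, f i) α = ∑ i ∈ s, pairing (f i) α := by
  classical
  induction s using Finset.induction with
  | empty => simp [pairing_zero]
  | insert a s' h ih => simp [Finset.sum_insert h, pairing_add, ih]

theorem root_inner_pos {α : V} (hα : α ∈ C.Φ) : 0 < ⟪α, α⟫_ℝ := by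
  have h := C.root_ne_zero α hα
  have h2 : 0 < ‖α‖ := norm_pos_iff.mpr h
  have h3 : ⟪α, α⟫_ℝ = ‖α‖ * ‖α‖ := real_inner_self_eq_norm_mul_norm α
  rw [h3]; exact mul_pos h2 h2

theorem pairing_self {α : V} (hα : α ∈ C.Φ) : pairing α α = 2 := by
  have h := C.root_inner_pos hα
  unfold pairing; field_simp

/-! ### reflections -/

theorem s_apply'' {α : V} (hα : α ∈ C.Φ) (v : V) :
    C.s α v = v - pairing v α • α := C.s_apply α hα v

theorem s_mem_W {α : V} (hα : α ∈ C.Φ) : C.s α ∈ C.W := by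
  rw [C.W_eq]; exact Subgroup.subset_closure ⟨α, hα, rfl⟩

theorem simple_s_mem_W (i : Fin C.r) : C.s (C.π i) ∈ C.W := C.s_mem_W (C.simple_mem i)

theorem s_apply_self {α : V} (hα : α ∈ C.Φ) : C.s α α = -α := by
  rw [C.s_apply'' hα, C.pairing_self hα]; module

theorem neg_root_mem {α : V} (hα : α ∈ C.Φ) : -α ∈ C.Φ := by
  have := C.refl_stable α hα α hα
  rwa [C.s_apply_self hα] at this

theorem s_s_apply {α : V} (hα : α ∈ C.Φ) (v : V) : C.s α (C.s α v) = v := by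
  rw [C.s_apply'' hα, C.s_apply'' hα, pairing_sub, pairing_smul, C.pairing_self hα]
  module

theorem s_mul_self {α : V} (hα : α ∈ C.Φ) : C.s α * C.s α = 1 := by
  ext v; exact C.s_s_apply hα v

theorem s_inv {α : V} (hα : α ∈ C.Φ) : (C.s α)⁻¹ = C.s α :=
  inv_eq_of_mul_eq_one_right (C.s_mul_self hα)

theorem s_neg {α : V} (hα : α ∈ C.Φ) : C.s (-α) = C.s α := by
  have hna : -α ∈ C.Φ := C.neg_root_mem hα
  ext v
  rw [C.s_apply'' hna, C.s_apply'' hα]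
  have : pairing v (-α) = - pairing v α := by
    simp [pairing, inner_neg_right, neg_div, mul_neg]
  rw [this]; module

/-! ### W-invariance basics -/

theorem inner_inv {g : V ≃ₗ[ℝ] V} (hg : g ∈ C.W) (u v : V) :
    ⟪g u, g v⟫_ℝ = ⟪u, v⟫_ℝ := C.inner_invariant g hg u v

theorem inner_inv_symm {g : V ≃ₗ[ℝ] V} (hg : g ∈ C.W) (u v : V) :
    ⟪g⁻¹ u, v⟫_ℝ = ⟪u, g v⟫_ℝ := by
  have := C.inner_invariant g hg (g⁻¹ u) v
  have h1 : g (g⁻¹ u) = u := by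
    have : g * g⁻¹ = 1 := mul_inv_cancel g
    calc g (g⁻¹ u) = (g * g⁻¹) u := rfl
    _ = u := by rw [this]; rfl
  rw [h1] at this; exact this.symm

theorem pairing_inv {g : V ≃ₗ[ℝ] V} (hg : g ∈ C.W) (x y : V) :
    pairing (g x) (g y) = pairing x y := by
  unfold pairing; rw [C.inner_inv hg, C.inner_inv hg]

/-- the subgroup of elements preserving Φ -/
private def stabΦ : Subgroup (V ≃ₗ[ℝ] V) where
  carrier := {g | ∀ α ∈ C.Φ, g α ∈ C.Φ ∧ g⁻¹ α ∈ C.Φ}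
  one_mem' := by intro α hα; constructor <;> simpa
  mul_mem' := by
    intro a b ha hb α hα
    constructor
    · have h1 := (hb α hα).1
      have h2 := (ha _ h1).1
      exact h2
    · have h1 := (ha α hα).2
      have h2 := (hb _ h1).2
      have : (a*b)⁻¹ α = b⁻¹ (a⁻¹ α) := by rw [mul_inv_rev]; rfl
      rwa [this]
  inv_mem' := by
    intro a ha α hα
    refine ⟨(ha α hα).2, ?_⟩
    rw [inv_inv]; exact (ha α hα).1

theorem root_stable {g : V ≃ₗ[ℝ] V} (hg : g ∈ C.W) {α : V} (hα : α ∈ C.Φ) :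
    g α ∈ C.Φ := by
  have hW : C.W ≤ C.stabΦ := by
    rw [C.W_eq]
    refine (Subgroup.closure_le _).2 ?_
    rintro x ⟨β, hβ, rfl⟩
    intro γ hγ
    rw [C.s_inv hβ]
    exact ⟨C.refl_stable β hβ γ hγ, C.refl_stable β hβ γ hγ⟩
  exact ((hW hg) α hα).1

theorem s_conj {g : V ≃ₗ[ℝ] V} (hg : g ∈ C.W) {α : V} (hα : α ∈ C.Φ) :
    C.s (g α) = g * C.s α * g⁻¹ := by
  have hgα : g α ∈ C.Φ := C.root_stable hg hα
  ext v
  have h1 : (g * C.s α * g⁻¹) v = g (C.s α (g⁻¹ v)) := rfl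
  rw [h1, C.s_apply'' hgα, C.s_apply'' hα]
  have h2 : pairing v (g α) = pairing (g⁻¹ v) α := by
    unfold pairing
    have e1 : ⟪g⁻¹ v, α⟫_ℝ = ⟪v, g α⟫_ℝ := C.inner_inv_symm hg v α
    rw [← e1, C.inner_inv hg α α]
  rw [h2]
  have h3 : g ((g⁻¹ v) - pairing (g⁻¹ v) α • α) = g (g⁻¹ v) - pairing (g⁻¹ v) α • g α := by
    rw [map_sub, map_smul]
  rw [h3]
  have : g (g⁻¹ v) = v := by
    calc g (g⁻¹ v) = (g * g⁻¹) v := rfl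
    _ = v := by rw [mul_inv_cancel]; rfl
  rw [this]

/-! ### the basis of simple roots -/

theorem root_mem_span {α : V} (hα : α ∈ C.Φ) :
    α ∈ Submodule.span ℝ (Set.range C.π) := by
  rcases C.pos_or_neg α hα with ⟨c, _, h⟩ | ⟨c, _, h⟩
  · rw [h]
    exact Submodule.sum_mem _ fun i _ =>
      Submodule.smul_mem _ _ (Submodule.subset_span ⟨i, rfl⟩)
  · have h2 : α = -(∑ i, c i • C.π i) := by rw [← h]; simp
    rw [h2]
    exact Submodule.neg_mem _ (Submodule.sum_mem _ fun i _ =>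
      Submodule.smul_mem _ _ (Submodule.subset_span ⟨i, rfl⟩))

theorem span_simple_top : ⊤ ≤ Submodule.span ℝ (Set.range C.π) := by
  rw [← C.root_span]
  refine Submodule.span_le.2 ?_
  intro α hα
  exact C.root_mem_span hα

/-- the simple roots as a basis of `V` -/
def bas : Module.Basis (Fin C.r) ℝ V := Module.Basis.mk C.simple_indep C.span_simple_top

theorem bas_apply (i : Fin C.r) : C.bas i = C.π i := Module.Basis.mk_apply _ _ i

/-- coordinates with respect to the simple roots -/
def coord (x : V) (i : Fin C.r) : ℝ := C.bas.repr x i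

theorem coord_add (x y : V) (i : Fin C.r) : C.coord (x+y) i = C.coord x i + C.coord y i := by
  simp [coord]

theorem coord_neg (x : V) (i : Fin C.r) : C.coord (-x) i = - C.coord x i := by
  simp [coord]

theorem coord_sub (x y : V) (i : Fin C.r) : C.coord (x-y) i = C.coord x i - C.coord y i := by
  simp [coord]

theorem coord_smul (c : ℝ) (x : V) (i : Fin C.r) : C.coord (c • x) i = c * C.coord x i := by
  simp [coord]

theorem coord_zero (i : Fin C.r) : C.coord (0:V) i = 0 := by simp [coord]

theorem coord_of_sum (c : Fin C.r → ℝ) (i : Fin C.r) :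
    C.coord (∑ j, c j • C.π j) i = c i := by
  unfold coord
  have : (∑ j, c j • C.π j) = ∑ j, c j • C.bas j := by
    congr 1; ext j; rw [C.bas_apply]
  rw [this]
  rw [map_sum]
  simp [Module.Basis.repr_self, Finsupp.smul_single, Finsupp.single_apply]

theorem eq_sum_coord (x : V) : x = ∑ i, C.coord x i • C.π i := by
  have := C.bas.sum_repr x
  conv_lhs => rw [← this]
  congr 1; ext i; rw [C.bas_apply]; rfl

theorem isPos_iff_coord (x : V) : C.IsPos x ↔ ∀ i, 0 ≤ C.coord x i := by
  constructor
  · rintro ⟨c, hc, rfl⟩ i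
    rw [C.coord_of_sum]; exact hc i
  · intro h
    exact ⟨C.coord x, h, C.eq_sum_coord x⟩

theorem isPos_zero : C.IsPos (0:V) :=
  (C.isPos_iff_coord 0).2 (by intro i; rw [C.coord_zero])

theorem isPos_add {x y : V} (hx : C.IsPos x) (hy : C.IsPos y) : C.IsPos (x+y) := by
  rw [C.isPos_iff_coord] at *
  intro i; rw [C.coord_add]; exact add_nonneg (hx i) (hy i)

theorem isPos_smul {c : ℝ} (hc : 0 ≤ c) {x : V} (hx : C.IsPos x) : C.IsPos (c • x) := by
  rw [C.isPos_iff_coord] at *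
  intro i; rw [C.coord_smul]; exact mul_nonneg hc (hx i)

theorem isPos_sum {ι : Type*} (s : Finset ι) (f : ι → V) (h : ∀ i ∈ s, C.IsPos (f i)) :
    C.IsPos (∑ i ∈ s, f i) := by
  classical
  induction s using Finset.induction with
  | empty => simpa using C.isPos_zero
  | insert a s' hni ih =>
      rw [Finset.sum_insert hni]
      exact C.isPos_add (h a (Finset.mem_insert_self a s'))
        (ih (fun i hi => h i (Finset.mem_insert_of_mem hi)))

theorem isPos_simple (i : Fin C.r) : C.IsPos (C.π i) := by
  rw [C.isPos_iff_coord]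
  intro j
  have : C.π i = ∑ k, (fun k => if k = i then (1:ℝ) else 0) k • C.π k := by
    rw [Finset.sum_eq_single i] <;> simp +contextual
  rw [this, C.coord_of_sum]
  split <;> norm_num

/-- the cone of nonnegative combinations of simple roots is pointed -/
theorem isPos_pointed {x : V} (hx : C.IsPos x) (hx' : C.IsPos (-x)) : x = 0 := by
  rw [C.isPos_iff_coord] at hx hx'
  have : ∀ i, C.coord x i = 0 := by
    intro i
    have := hx' i
    rw [C.coord_neg] at this
    linarith [hx i]
  have h2 := C.eq_sum_coord x
  rw [h2]
  apply Finset.sum_eq_zero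
  intro i _
  rw [this i, zero_smul]

theorem root_pos_or_neg {α : V} (hα : α ∈ C.Φ) : C.IsPos α ∨ C.IsNeg α := by
  rcases C.pos_or_neg α hα with h | h
  · exact Or.inl h
  · exact Or.inr h

theorem root_not_pos_and_neg {α : V} (hα : α ∈ C.Φ) : ¬ (C.IsPos α ∧ C.IsNeg α) := by
  rintro ⟨h1, h2⟩
  exact C.root_ne_zero α hα (C.isPos_pointed h1 h2)

theorem isNeg_iff_not_isPos {α : V} (hα : α ∈ C.Φ) : C.IsNeg α ↔ ¬ C.IsPos α := by
  constructor
  · intro h hp; exact C.root_not_pos_and_neg hα ⟨hp, h⟩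
  · intro h; rcases C.root_pos_or_neg hα with h' | h'
    · exact absurd h' h
    · exact h'

theorem isPos_neg_iff {α : V} : C.IsPos (-α) ↔ C.IsNeg α := Iff.rfl


end
end RootSystemData

namespace RootSystemData
section


variable {V : Type} [NormedAddCommGroup V] [InnerProductSpace ℝ V] [FiniteDimensional ℝ V]
variable (C : RootSystemData V)

theorem inner_eq_pairing (x : V) {α : V} (hα : α ∈ C.Φ) :
    ⟪x, α⟫_ℝ = pairing x α * (⟪α, α⟫_ℝ / 2) := by
  have h := C.root_inner_pos hα
  unfold pairing; field_simp

/-- `⟪ω i, π j⟫ = δ_{ij} ⟪π j, π j⟫ / 2` -/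
theorem inner_omega_simple (i j : Fin C.r) :
    ⟪C.ω i, C.π j⟫_ℝ = (if i = j then (1:ℝ) else 0) * (⟪C.π j, C.π j⟫_ℝ / 2) := by
  have h := C.fund i j
  have : pairing (C.ω i) (C.π j) = if i = j then (1:ℝ) else 0 := h
  rw [C.inner_eq_pairing _ (C.simple_mem j), this]

theorem pairing_omega (i j : Fin C.r) :
    pairing (C.ω i) (C.π j) = if i = j then (1:ℝ) else 0 := C.fund i j

/-- Negative vectors have nonpositive coordinates -/
theorem coord_nonpos_of_isNeg {x : V} (hx : C.IsNeg x) (i : Fin C.r) : C.coord x i ≤ 0 := by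
  have := (C.isPos_iff_coord (-x)).1 hx i
  rw [C.coord_neg] at this
  linarith

theorem coord_nonneg_of_isPos {x : V} (hx : C.IsPos x) (i : Fin C.r) : 0 ≤ C.coord x i :=
  (C.isPos_iff_coord x).1 hx i

/-- A positive root other than `π i` has a positive coordinate away from `i`. -/
theorem pos_root_coord {β : V} (hβ : β ∈ C.Φ) (hpos : C.IsPos β) (hne : β ≠ C.π i) :
    ∃ j, j ≠ i ∧ 0 < C.coord β j := by
  by_contra h
  push_neg at h
  have hcoord : ∀ j, j ≠ i → C.coord β j = 0 := by
    intro j hj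
    have h1 := h j hj
    have h2 := C.coord_nonneg_of_isPos hpos j
    linarith
  have hβeq : β = C.coord β i • C.π i := by
    conv_lhs => rw [C.eq_sum_coord β]
    rw [Finset.sum_eq_single i]
    · intro j _ hj; rw [hcoord j hj, zero_smul]
    · intro hi; exact absurd (Finset.mem_univ i) hi
  have hmem : C.coord β i • C.π i ∈ C.Φ := by rw [← hβeq]; exact hβ
  rcases C.reduced (C.π i) (C.simple_mem i) _ hmem with h1 | h1
  · rw [h1, one_smul] at hβeq; exact hne hβeq
  · rw [h1] at hβeq
    have hneg : β = -C.π i := by rw [hβeq]; module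
    have hpos' : C.IsPos (C.π i) := C.isPos_simple i
    have : C.IsNeg (C.π i) := by
      rw [← C.isPos_neg_iff] at *
      rw [← hneg]; exact hpos
    exact C.root_not_pos_and_neg (C.simple_mem i) ⟨hpos', this⟩

theorem s_simple_apply (i : Fin C.r) (x : V) :
    C.s (C.π i) x = x - pairing x (C.π i) • C.π i := C.s_apply'' (C.simple_mem i) x

theorem coord_s_simple (i : Fin C.r) (x : V) {j : Fin C.r} (hj : j ≠ i) :
    C.coord (C.s (C.π i) x) j = C.coord x j := by
  rw [C.s_simple_apply, C.coord_sub, C.coord_smul]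
  have : C.coord (C.π i) j = 0 := by
    have h := C.coord_of_sum (fun k => if k = i then (1:ℝ) else 0) j
    have h2 : (∑ k, (fun k => if k = i then (1:ℝ) else 0) k • C.π k) = C.π i := by
      rw [Finset.sum_eq_single i] <;> simp +contextual
    rw [h2] at h
    rw [h]; simp [hj]
  rw [this]; ring

/-- **Key lemma**: `s i` permutes the positive roots other than `π i`. -/
theorem s_simple_perm {β : V} (hβ : β ∈ C.Φ) (hpos : C.IsPos β) (i : Fin C.r)
    (hne : β ≠ C.π i) : C.s (C.π i) β ∈ C.Φ ∧ C.IsPos (C.s (C.π i) β) ∧ C.s (C.π i) β ≠ C.π i := by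
  obtain ⟨j, hj, hjpos⟩ := C.pos_root_coord hβ hpos hne
  have hmem : C.s (C.π i) β ∈ C.Φ := C.refl_stable _ (C.simple_mem i) _ hβ
  have hcoordj : 0 < C.coord (C.s (C.π i) β) j := by
    rw [C.coord_s_simple i β hj]; exact hjpos
  have hp : C.IsPos (C.s (C.π i) β) := by
    rcases C.root_pos_or_neg hmem with h | h
    · exact h
    · have := C.coord_nonpos_of_isNeg h j
      linarith
  refine ⟨hmem, hp, ?_⟩
  intro heq
  have h2 := congrArg (C.s (C.π i)) heq
  rw [C.s_s_apply (C.simple_mem i), C.s_apply_self (C.simple_mem i)] at h2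
  have hpos' : C.IsNeg β := by
    rw [← C.isPos_neg_iff, h2]
    simpa using C.isPos_simple i
  exact C.root_not_pos_and_neg hβ ⟨hpos, hpos'⟩

/-- If a positive root is sent to a negative root by `s i`, it is `π i`. -/
theorem eq_simple_of_s_neg {β : V} (hβ : β ∈ C.Φ) (hpos : C.IsPos β) (i : Fin C.r)
    (hneg : C.IsNeg (C.s (C.π i) β)) : β = C.π i := by
  by_contra h
  obtain ⟨hmem, hp, _⟩ := C.s_simple_perm hβ hpos i h
  exact C.root_not_pos_and_neg hmem ⟨hp, hneg⟩

/-- obtuseness of simple roots -/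
theorem simple_obtuse {i j : Fin C.r} (hij : i ≠ j) : ⟪C.π i, C.π j⟫_ℝ ≤ 0 := by
  by_contra h
  push_neg at h
  have hp : 0 < pairing (C.π i) (C.π j) := by
    have h2 := C.root_inner_pos (C.simple_mem j)
    unfold pairing
    positivity
  set γ := C.s (C.π j) (C.π i) with hγ
  have hγmem : γ ∈ C.Φ := C.refl_stable _ (C.simple_mem j) _ (C.simple_mem i)
  have hγi : C.coord γ i = 1 := by
    rw [hγ, C.coord_s_simple j _ hij]
    have h2 : (∑ k, (fun k => if k = i then (1:ℝ) else 0) k • C.π k) = C.π i := by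
      rw [Finset.sum_eq_single i] <;> simp +contextual
    have := C.coord_of_sum (fun k => if k = i then (1:ℝ) else 0) i
    rw [h2] at this; rw [this]; simp
  have hγj : C.coord γ j = C.coord (C.π i) j - pairing (C.π i) (C.π j) := by
    rw [hγ, C.s_simple_apply, C.coord_sub, C.coord_smul]
    have h2 : (∑ k, (fun k => if k = j then (1:ℝ) else 0) k • C.π k) = C.π j := by
      rw [Finset.sum_eq_single j] <;> simp +contextual
    have := C.coord_of_sum (fun k => if k = j then (1:ℝ) else 0) j
    rw [h2] at this; rw [this]; simp
  have hπij : C.coord (C.π i) j = 0 := by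
    have h2 : (∑ k, (fun k => if k = i then (1:ℝ) else 0) k • C.π k) = C.π i := by
      rw [Finset.sum_eq_single i] <;> simp +contextual
    have := C.coord_of_sum (fun k => if k = i then (1:ℝ) else 0) j
    rw [h2] at this; rw [this]; simp [hij.symm]
  rcases C.root_pos_or_neg hγmem with hh | hh
  · have := C.coord_nonneg_of_isPos hh j
    rw [hγj, hπij] at this
    linarith
  · have := C.coord_nonpos_of_isNeg hh i
    rw [hγi] at this
    linarith

/-- fundamental weights lie in the positive cone -/
theorem isPos_omega (i : Fin C.r) : C.IsPos (C.ω i) := by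
  set c := C.coord (C.ω i) with hc
  set p : Fin C.r → ℝ := fun j => max (c j) 0 with hp
  set n : Fin C.r → ℝ := fun j => max (-(c j)) 0 with hn
  have hcpn : ∀ j, c j = p j - n j := by
    intro j; rw [hp, hn]; rcases le_total (c j) 0 with h | h
    · simp [max_eq_right h, max_eq_left (by linarith : (0:ℝ) ≤ -(c j))]
    · simp [max_eq_left h, max_eq_right (by linarith : -(c j) ≤ 0)]
  set P := ∑ j, p j • C.π j with hP
  set N := ∑ j, n j • C.π j with hN
  have hsplit : C.ω i = P - N := by
    conv_lhs => rw [C.eq_sum_coord (C.ω i)]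
    rw [hP, hN, ← Finset.sum_sub_distrib]
    congr 1; ext j
    rw [← hc, hcpn j, sub_smul]
  -- ⟪N, ω i⟫ ≥ 0
  have hNω : 0 ≤ ⟪N, C.ω i⟫_ℝ := by
    rw [hN, sum_inner]
    apply Finset.sum_nonneg
    intro j _
    rw [real_inner_smul_left]
    have : ⟪C.π j, C.ω i⟫_ℝ = ⟪C.ω i, C.π j⟫_ℝ := real_inner_comm _ _
    rw [this, C.inner_omega_simple i j]
    have := C.root_inner_pos (C.simple_mem j)
    have hnj : 0 ≤ n j := le_max_right _ _
    split <;> positivity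
  -- ⟪N, P⟫ ≤ 0
  have hNP : ⟪N, P⟫_ℝ ≤ 0 := by
    rw [hN, hP, sum_inner]
    apply Finset.sum_nonpos
    intro j _
    rw [real_inner_smul_left, inner_sum]
    rw [Finset.mul_sum]
    apply Finset.sum_nonpos
    intro k _
    rw [real_inner_smul_right]
    rcases eq_or_ne j k with rfl | hjk
    · have hzero : n j * p j = 0 := by
        rcases le_total (c j) 0 with h | h
        · have hpj : p j = 0 := sup_eq_right.mpr h
          rw [hpj, mul_zero]
        · have hnj : n j = 0 := sup_eq_right.mpr (by linarith : -(c j) ≤ 0)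
          rw [hnj, zero_mul]
      have h2 : n j * (p j * ⟪C.π j, C.π j⟫_ℝ) = (n j * p j) * ⟪C.π j, C.π j⟫_ℝ := by ring
      rw [h2, hzero, zero_mul]
    · have h1 : ⟪C.π j, C.π k⟫_ℝ ≤ 0 := C.simple_obtuse hjk
      have hnj : 0 ≤ n j := le_max_right _ _
      have hpk : 0 ≤ p k := le_max_right _ _
      have : 0 ≤ n j * p k := mul_nonneg hnj hpk
      nlinarith
  have hNN : ⟪N, N⟫_ℝ ≤ 0 := by
    have : ⟪N, C.ω i⟫_ℝ = ⟪N, P⟫_ℝ - ⟪N, N⟫_ℝ := by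
      rw [hsplit, inner_sub_right]
    nlinarith
  have hN0 : N = 0 := by
    by_contra h
    have : 0 < ⟪N, N⟫_ℝ := by
      have h2 : 0 < ‖N‖ := norm_pos_iff.mpr h
      have h3 : ⟪N, N⟫_ℝ = ‖N‖ * ‖N‖ := real_inner_self_eq_norm_mul_norm N
      rw [h3]; exact mul_pos h2 h2
    linarith
  have : C.ω i = P := by rw [hsplit, hN0, sub_zero]
  rw [this, hP]
  exact C.isPos_sum _ _ fun j _ => C.isPos_smul (le_max_right _ _) (C.isPos_simple j)

/-- pairing of a dominant vector with the positive cone is nonnegative -/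
theorem dominant_inner_pos_cone {ν x : V} (hν : C.IsDominant ν) (hx : C.IsPos x) :
    0 ≤ ⟪ν, x⟫_ℝ := by
  obtain ⟨c, hc, rfl⟩ := hx
  rw [inner_sum]
  apply Finset.sum_nonneg
  intro i _
  rw [real_inner_smul_right, C.inner_eq_pairing ν (C.simple_mem i)]
  have h1 := hν i
  have h2 := (C.root_inner_pos (C.simple_mem i)).le
  have := hc i
  positivity

/-- expansion in fundamental weights -/
theorem eq_sum_pairing_omega (x : V) : x = ∑ j, pairing x (C.π j) • C.ω j := by
  rcases isEmpty_or_nonempty (Fin C.r) with hE | hNE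
  · have h0 : Module.finrank ℝ V = 0 := by
      rw [Module.finrank_eq_card_basis C.bas, Fintype.card_eq_zero]
    haveI : Subsingleton V := Module.finrank_zero_iff.mp h0
    rw [Finset.univ_eq_empty, Finset.sum_empty]
    exact Subsingleton.elim x 0
  have hωind : LinearIndependent ℝ C.ω := by
    rw [Fintype.linearIndependent_iff]
    intro g hg j
    have := congrArg (fun z => pairing z (C.π j)) hg
    rw [pairing_sum, pairing_zero] at this
    rw [Finset.sum_eq_single j] at this
    · rw [pairing_smul, C.pairing_omega] at this
      simpa using this
    · intro k _ hk
      rw [pairing_smul, C.pairing_omega]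
      simp [hk]
    · intro h; exact absurd (Finset.mem_univ j) h
  have hcard : Fintype.card (Fin C.r) = Module.finrank ℝ V :=
    (Module.finrank_eq_card_basis C.bas).symm
  let ωbas : Module.Basis (Fin C.r) ℝ V := basisOfLinearIndependentOfCardEqFinrank hωind hcard
  have hωbas : ∀ j, ωbas j = C.ω j := fun j =>
    coe_basisOfLinearIndependentOfCardEqFinrank hωind hcard ▸ rfl
  have hx := ωbas.sum_repr x
  have hx2 : x = ∑ j, (ωbas.repr x j) • C.ω j := by
    conv_lhs => rw [← hx]
    congr 1; ext j; rw [hωbas]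
  have hrepr : ∀ j, pairing x (C.π j) = ωbas.repr x j := by
    intro j
    conv_lhs => rw [hx2]
    rw [pairing_sum]
    rw [Finset.sum_eq_single j]
    · rw [pairing_smul, C.pairing_omega]; simp
    · intro k _ hk; rw [pairing_smul, C.pairing_omega]; simp [hk]
    · intro h; exact absurd (Finset.mem_univ j) h
  conv_lhs => rw [hx2]
  congr 1; ext j; rw [hrepr]

/-- two dominant vectors pair nonnegatively -/
theorem dominant_inner_dominant {ν σ : V} (hν : C.IsDominant ν) (hσ : C.IsDominant σ) :
    0 ≤ ⟪ν, σ⟫_ℝ := by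
  conv_rhs => rw [C.eq_sum_pairing_omega σ]
  rw [inner_sum]
  apply Finset.sum_nonneg
  intro j _
  rw [real_inner_smul_right]
  have h1 := hσ j
  have h3 : 0 ≤ ⟪ν, C.ω j⟫_ℝ := C.dominant_inner_pos_cone hν (C.isPos_omega j)
  positivity

/-- the sum of the fundamental weights -/
def varpi : V := ∑ i, C.ω i

theorem pairing_varpi (j : Fin C.r) : pairing C.varpi (C.π j) = 1 := by
  unfold varpi
  rw [pairing_sum, Finset.sum_eq_single j]
  · rw [C.pairing_omega]; simp
  · intro k _ hk; rw [C.pairing_omega]; simp [hk]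
  · intro h; exact absurd (Finset.mem_univ j) h

theorem inner_varpi_simple_pos (j : Fin C.r) : 0 < ⟪C.varpi, C.π j⟫_ℝ := by
  rw [C.inner_eq_pairing _ (C.simple_mem j), C.pairing_varpi]
  have := C.root_inner_pos (C.simple_mem j)
  positivity

theorem inner_varpi_pos {x : V} (hx : C.IsPos x) (hx0 : x ≠ 0) : 0 < ⟪C.varpi, x⟫_ℝ := by
  have hcoord := (C.isPos_iff_coord x).1 hx
  have hex : ∃ i, 0 < C.coord x i := by
    by_contra h
    push_neg at h
    apply hx0
    have : ∀ i, C.coord x i = 0 := fun i => le_antisymm (h i) (hcoord i)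
    rw [C.eq_sum_coord x]
    apply Finset.sum_eq_zero
    intro i _
    rw [this i, zero_smul]
  obtain ⟨i, hi⟩ := hex
  conv_rhs => rw [C.eq_sum_coord x]
  rw [inner_sum]
  have : ∀ j ∈ Finset.univ, 0 ≤ ⟪C.varpi, C.coord x j • C.π j⟫_ℝ := by
    intro j _
    rw [real_inner_smul_right]
    exact mul_nonneg (hcoord j) (C.inner_varpi_simple_pos j).le
  apply Finset.sum_pos'  this
  refine ⟨i, Finset.mem_univ i, ?_⟩
  rw [real_inner_smul_right]
  exact mul_pos hi (C.inner_varpi_simple_pos i)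

theorem inner_varpi_nonneg {x : V} (hx : C.IsPos x) : 0 ≤ ⟪C.varpi, x⟫_ℝ := by
  rcases eq_or_ne x 0 with rfl | h
  · simp
  · exact (C.inner_varpi_pos hx h).le

/-- integrality of the pairing on the weight lattice -/
theorem pairing_int {x : V} (hx : x ∈ C.X) (i : Fin C.r) :
    ∃ n : ℤ, pairing x (C.π i) = n := by
  rw [C.X_eq] at hx
  induction hx using AddSubgroup.closure_induction with
  | mem x hxmem =>
      obtain ⟨j, rfl⟩ := hxmem
      exact ⟨if j = i then 1 else 0, by rw [C.pairing_omega]; split <;> simp⟩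
  | zero => exact ⟨0, by rw [pairing_zero]; simp⟩
  | add x y _ _ hx hy =>
      obtain ⟨n, hn⟩ := hx
      obtain ⟨m, hm⟩ := hy
      exact ⟨n + m, by rw [pairing_add, hn, hm]; push_cast; ring⟩
  | neg x _ hx =>
      obtain ⟨n, hn⟩ := hx
      exact ⟨-n, by rw [pairing_neg, hn]; push_cast; ring⟩


end
end RootSystemData

namespace RootSystemData
section


variable {V : Type} [NormedAddCommGroup V] [InnerProductSpace ℝ V] [FiniteDimensional ℝ V]
variable (C : RootSystemData V)

theorem mul_apply (g h : V ≃ₗ[ℝ] V) (v : V) : (g * h) v = g (h v) := rfl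
theorem one_apply (v : V) : (1 : V ≃ₗ[ℝ] V) v = v := rfl

theorem inv_apply_apply {g : V ≃ₗ[ℝ] V} (v : V) : g⁻¹ (g v) = v := by
  have : g⁻¹ * g = 1 := inv_mul_cancel g
  calc g⁻¹ (g v) = (g⁻¹ * g) v := rfl
  _ = v := by rw [this]; rfl

theorem apply_inv_apply {g : V ≃ₗ[ℝ] V} (v : V) : g (g⁻¹ v) = v := by
  have : g * g⁻¹ = 1 := mul_inv_cancel g
  calc g (g⁻¹ v) = (g * g⁻¹) v := rfl
  _ = v := by rw [this]; rfl

/-! ### words -/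

theorem wordProd_nil : C.wordProd [] = 1 := by simp [wordProd]

theorem wordProd_cons (i : Fin C.r) (t : List (Fin C.r)) :
    C.wordProd (i :: t) = C.s (C.π i) * C.wordProd t := by
  simp [wordProd]

theorem wordProd_append (l l' : List (Fin C.r)) :
    C.wordProd (l ++ l') = C.wordProd l * C.wordProd l' := by
  simp [wordProd]

theorem wordProd_singleton (i : Fin C.r) : C.wordProd [i] = C.s (C.π i) := by
  simp [wordProd]

theorem wordProd_mem (l : List (Fin C.r)) : C.wordProd l ∈ C.W := by
  induction l with
  | nil => rw [C.wordProd_nil]; exact one_mem _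
  | cons i t ih =>
      rw [C.wordProd_cons]
      exact mul_mem (C.simple_s_mem_W i) ih

theorem wordProd_reverse (l : List (Fin C.r)) :
    C.wordProd l.reverse = (C.wordProd l)⁻¹ := by
  induction l with
  | nil => rw [C.wordProd_nil]; simp [wordProd]
  | cons i t ih =>
      rw [List.reverse_cons, C.wordProd_append, ih, C.wordProd_singleton, C.wordProd_cons,
        mul_inv_rev, C.s_inv (C.simple_mem i)]

/-! ### every element of W is a word in the simple reflections -/

private theorem s_word_of_pos_aux :
    ∀ n : ℕ, ∀ α, α ∈ C.Φ → C.IsPos α →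
      (C.Φ.filter (fun γ => C.IsPos γ ∧ ⟪C.varpi, γ⟫_ℝ < ⟪C.varpi, α⟫_ℝ)).card = n →
      ∃ l, C.s α = C.wordProd l := by
  intro n
  induction n using Nat.strong_induction_on with
  | _ n ih =>
    intro α hα hpos hcard
    by_cases hsimple : ∃ i, α = C.π i
    · obtain ⟨i, rfl⟩ := hsimple
      exact ⟨[i], (C.wordProd_singleton i).symm⟩
    · push_neg at hsimple
      have hsum : ∀ y : V, ⟪y, α⟫_ℝ = ∑ i, C.coord y i * ⟪C.π i, α⟫_ℝ := by
        intro y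
        conv_lhs => rw [C.eq_sum_coord y]
        rw [sum_inner]
        congr 1; ext i; rw [real_inner_smul_left]
      have hex : ∃ i, 0 < C.coord α i ∧ 0 < ⟪C.π i, α⟫_ℝ := by
        by_contra h
        push_neg at h
        have h0 : 0 < ⟪α, α⟫_ℝ := C.root_inner_pos hα
        have h1 := hsum α
        have h2 : ∑ i, C.coord α i * ⟪C.π i, α⟫_ℝ ≤ 0 := by
          apply Finset.sum_nonpos
          intro i _
          have hci := C.coord_nonneg_of_isPos hpos i
          rcases lt_or_ge 0 (C.coord α i) with hc | hc
          · have := h i hc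
            exact mul_nonpos_of_nonneg_of_nonpos hci this
          · have : C.coord α i = 0 := le_antisymm hc hci
            rw [this, zero_mul]
        rw [h1] at h0
        linarith
      obtain ⟨i, hci, hinner⟩ := hex
      have hne : α ≠ C.π i := hsimple i
      obtain ⟨hβmem, hβpos, _⟩ := C.s_simple_perm hα hpos i hne
      set β := C.s (C.π i) α with hβ
      have hpair : 0 < pairing α (C.π i) := by
        have h2 := C.root_inner_pos (C.simple_mem i)
        have h3 : ⟪α, C.π i⟫_ℝ = ⟪C.π i, α⟫_ℝ := real_inner_comm _ _
        unfold pairing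
        rw [h3]
        positivity
      have hlt : ⟪C.varpi, β⟫_ℝ < ⟪C.varpi, α⟫_ℝ := by
        rw [hβ, C.s_simple_apply, inner_sub_right, real_inner_smul_right]
        have := C.inner_varpi_simple_pos i
        nlinarith
      -- the measure decreases
      set Sβ := C.Φ.filter (fun γ => C.IsPos γ ∧ ⟪C.varpi, γ⟫_ℝ < ⟪C.varpi, β⟫_ℝ) with hSβ
      set Sα := C.Φ.filter (fun γ => C.IsPos γ ∧ ⟪C.varpi, γ⟫_ℝ < ⟪C.varpi, α⟫_ℝ) with hSα
      have hsub : Sβ ⊂ Sα := by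
        constructor
        · intro γ hγ
          rw [hSβ, Finset.mem_filter] at hγ
          rw [hSα, Finset.mem_filter]
          exact ⟨hγ.1, hγ.2.1, lt_trans hγ.2.2 hlt⟩
        · intro hcon
          have hβin : β ∈ Sα := by
            rw [hSα, Finset.mem_filter]
            exact ⟨hβmem, hβpos, hlt⟩
          have := hcon hβin
          rw [hSβ, Finset.mem_filter] at this
          exact lt_irrefl _ this.2.2
      have hcardlt : Sβ.card < n := by
        rw [← hcard, hSα]
        exact Finset.card_lt_card hsub
      obtain ⟨lβ, hlβ⟩ := ih Sβ.card hcardlt β hβmem hβpos rfl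
      -- s α = s i * s β * s i
      have hαβ : α = C.s (C.π i) β := by
        rw [hβ, C.s_s_apply (C.simple_mem i)]
      have hconj : C.s α = C.s (C.π i) * C.s β * (C.s (C.π i))⁻¹ := by
        conv_lhs => rw [hαβ]
        exact C.s_conj (C.simple_s_mem_W i) hβmem
      refine ⟨[i] ++ lβ ++ [i], ?_⟩
      rw [C.wordProd_append, C.wordProd_append, C.wordProd_singleton, ← hlβ, hconj,
        C.s_inv (C.simple_mem i)]

theorem s_root_word {α : V} (hα : α ∈ C.Φ) : ∃ l, C.s α = C.wordProd l := by
  rcases C.root_pos_or_neg hα with h | h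
  · exact C.s_word_of_pos_aux _ α hα h rfl
  · have hneg : -α ∈ C.Φ := C.neg_root_mem hα
    have : C.s α = C.s (-α) := (C.s_neg hα).symm
    rw [this]
    exact C.s_word_of_pos_aux _ (-α) hneg h rfl

theorem exists_word {g : V ≃ₗ[ℝ] V} (hg : g ∈ C.W) : ∃ l, C.wordProd l = g := by
  rw [C.W_eq] at hg
  induction hg using Subgroup.closure_induction with
  | mem x hx =>
      obtain ⟨α, hα, rfl⟩ := hx
      obtain ⟨l, hl⟩ := C.s_root_word hα
      exact ⟨l, hl.symm⟩
  | one => exact ⟨[], C.wordProd_nil⟩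
  | mul x y _ _ hx hy =>
      obtain ⟨l, hl⟩ := hx
      obtain ⟨l', hl'⟩ := hy
      exact ⟨l ++ l', by rw [C.wordProd_append, hl, hl']⟩
  | inv x _ hx =>
      obtain ⟨l, hl⟩ := hx
      exact ⟨l.reverse, by rw [C.wordProd_reverse, hl]⟩

/-! ### length basics -/

theorem length_le {g : V ≃ₗ[ℝ] V} (l : List (Fin C.r)) (hl : C.wordProd l = g) :
    C.length g ≤ l.length :=
  Nat.sInf_le ⟨l, rfl, hl⟩

theorem exists_reduced_word {g : V ≃ₗ[ℝ] V} (hg : g ∈ C.W) :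
    ∃ l : List (Fin C.r), l.length = C.length g ∧ C.wordProd l = g := by
  have hne : {n | ∃ l : List (Fin C.r), l.length = n ∧ C.wordProd l = g}.Nonempty := by
    obtain ⟨l, hl⟩ := C.exists_word hg
    exact ⟨l.length, l, rfl, hl⟩
  exact Nat.sInf_mem hne

theorem length_one : C.length 1 = 0 :=
  Nat.le_zero.1 (C.length_le [] C.wordProd_nil)

theorem eq_one_of_length_zero {g : V ≃ₗ[ℝ] V} (hg : g ∈ C.W) (h : C.length g = 0) :
    g = 1 := by
  obtain ⟨l, hlen, hprod⟩ := C.exists_reduced_word hg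
  rw [h] at hlen
  rw [List.length_eq_zero_iff] at hlen
  rw [hlen, C.wordProd_nil] at hprod
  exact hprod.symm

theorem length_inv {g : V ≃ₗ[ℝ] V} (hg : g ∈ C.W) : C.length g⁻¹ = C.length g := by
  have h1 : ∀ h : V ≃ₗ[ℝ] V, h ∈ C.W → C.length h⁻¹ ≤ C.length h := by
    intro h hh
    obtain ⟨l, hlen, hprod⟩ := C.exists_reduced_word hh
    have : C.wordProd l.reverse = h⁻¹ := by rw [C.wordProd_reverse, hprod]
    have h2 := C.length_le _ this
    rwa [List.length_reverse, hlen] at h2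
  have h2 := h1 g hg
  have h3 := h1 g⁻¹ (inv_mem hg)
  rw [inv_inv] at h3
  omega

theorem length_mul_le {g h : V ≃ₗ[ℝ] V} (hg : g ∈ C.W) (hh : h ∈ C.W) :
    C.length (g * h) ≤ C.length g + C.length h := by
  obtain ⟨l, hlen, hprod⟩ := C.exists_reduced_word hg
  obtain ⟨l', hlen', hprod'⟩ := C.exists_reduced_word hh
  have : C.wordProd (l ++ l') = g * h := by rw [C.wordProd_append, hprod, hprod']
  have h2 := C.length_le _ this
  rwa [List.length_append, hlen, hlen'] at h2

/-! ### strong exchange -/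

theorem strong_exchange (l : List (Fin C.r)) {α : V} (hα : α ∈ C.Φ) (hpos : C.IsPos α)
    (hneg : C.IsNeg (C.wordProd l α)) :
    ∃ j, ∃ h : j < l.length, C.wordProd (l.eraseIdx j) = C.wordProd l * C.s α := by
  induction l with
  | nil =>
      exfalso
      rw [C.wordProd_nil] at hneg
      exact C.root_not_pos_and_neg hα ⟨hpos, hneg⟩
  | cons i t ih =>
      have huα : C.wordProd t α ∈ C.Φ := C.root_stable (C.wordProd_mem t) hα
      rcases C.root_pos_or_neg huα with hupos | huneg
      · -- the sign change happens at letter i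
        have hwα : C.wordProd (i :: t) α = C.s (C.π i) (C.wordProd t α) := by
          rw [C.wordProd_cons, mul_apply]
        rw [hwα] at hneg
        have := C.eq_simple_of_s_neg huα hupos i hneg
        -- wordProd t α = π i
        have hconj : C.s (C.π i) = C.wordProd t * C.s α * (C.wordProd t)⁻¹ := by
          conv_lhs => rw [← this]
          exact C.s_conj (C.wordProd_mem t) hα
        refine ⟨0, by simp, ?_⟩
        have he : (i :: t).eraseIdx 0 = t := rfl
        have hgrp : C.wordProd t * C.s α * (C.wordProd t)⁻¹ * C.wordProd t * C.s α
            = C.wordProd t * (C.s α * C.s α) := by group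
        rw [he, C.wordProd_cons, hconj, hgrp, C.s_mul_self hα, mul_one]
      · obtain ⟨j, hj, hword⟩ := ih huneg
        refine ⟨j + 1, by simpa using hj, ?_⟩
        have he : (i :: t).eraseIdx (j+1) = i :: t.eraseIdx j := rfl
        rw [he, C.wordProd_cons, hword, C.wordProd_cons]
        group

theorem length_mul_s_lt_of_neg {w : V ≃ₗ[ℝ] V} (hw : w ∈ C.W) {α : V} (hα : α ∈ C.Φ)
    (hpos : C.IsPos α) (hneg : C.IsNeg (w α)) :
    C.length (w * C.s α) < C.length w := by
  obtain ⟨l, hlen, hprod⟩ := C.exists_reduced_word hw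
  have hneg' : C.IsNeg (C.wordProd l α) := by rw [hprod]; exact hneg
  obtain ⟨j, hj, hword⟩ := C.strong_exchange l hα hpos hneg'
  rw [hprod] at hword
  have h2 := C.length_le _ hword
  have h3 : (l.eraseIdx j).length = l.length - 1 := by
    rw [List.length_eraseIdx]
    simp [hj]
  have h4 : 1 ≤ l.length := by
    by_contra h
    push_neg at h
    interval_cases hl : l.length
    · rw [List.length_eq_zero_iff] at hl
      rw [hl, C.wordProd_nil] at hprod
      rw [← hprod, one_apply] at hneg
      exact C.root_not_pos_and_neg hα ⟨hpos, hneg⟩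
  omega

theorem length_mul_s_gt_of_pos {w : V ≃ₗ[ℝ] V} (hw : w ∈ C.W) {α : V} (hα : α ∈ C.Φ)
    (hpos : C.IsPos α) (hposw : C.IsPos (w α)) :
    C.length w < C.length (w * C.s α) := by
  have hw' : w * C.s α ∈ C.W := mul_mem hw (C.s_mem_W hα)
  have hα' : C.IsNeg ((w * C.s α) α) := by
    have : (w * C.s α) α = w (C.s α α) := rfl
    rw [this, C.s_apply_self hα]
    have : w (-α) = -(w α) := by rw [map_neg]
    rw [this]
    simpa [RootSystemData.IsNeg] using hposw
  have := C.length_mul_s_lt_of_neg hw' hα hpos hα'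
  have heq : w * C.s α * C.s α = w := by
    rw [mul_assoc, C.s_mul_self hα, mul_one]
  rwa [heq] at this

/-- dichotomy form -/
theorem length_s_lt_iff {w : V ≃ₗ[ℝ] V} (hw : w ∈ C.W) {α : V} (hα : α ∈ C.Φ)
    (hpos : C.IsPos α) : C.length (w * C.s α) < C.length w ↔ C.IsNeg (w α) := by
  constructor
  · intro h
    rcases C.root_pos_or_neg (C.root_stable hw hα) with h' | h'
    · exfalso
      have := C.length_mul_s_gt_of_pos hw hα hpos h'
      omega
    · exact h'
  · exact C.length_mul_s_lt_of_neg hw hα hpos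

theorem length_s_gt_iff {w : V ≃ₗ[ℝ] V} (hw : w ∈ C.W) {α : V} (hα : α ∈ C.Φ)
    (hpos : C.IsPos α) : C.length w < C.length (w * C.s α) ↔ C.IsPos (w α) := by
  constructor
  · intro h
    rcases C.root_pos_or_neg (C.root_stable hw hα) with h' | h'
    · exact h'
    · exfalso
      have := C.length_mul_s_lt_of_neg hw hα hpos h'
      omega
  · exact C.length_mul_s_gt_of_pos hw hα hpos

/-- left version: `ℓ(s_i w) < ℓ(w)` iff `w⁻¹ α_i < 0`. -/
theorem length_left_s_lt_iff {w : V ≃ₗ[ℝ] V} (hw : w ∈ C.W) (i : Fin C.r) :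
    C.length (C.s (C.π i) * w) < C.length w ↔ C.IsNeg (w⁻¹ (C.π i)) := by
  have h1 : C.length (C.s (C.π i) * w) = C.length (w⁻¹ * C.s (C.π i)) := by
    have : (C.s (C.π i) * w)⁻¹ = w⁻¹ * (C.s (C.π i))⁻¹ := mul_inv_rev _ _
    rw [← C.length_inv (mul_mem (C.simple_s_mem_W i) hw), this, C.s_inv (C.simple_mem i)]
  rw [h1, ← C.length_inv hw]
  exact C.length_s_lt_iff (inv_mem hw) (C.simple_mem i) (C.isPos_simple i)


end
end RootSystemData

namespace RootSystemData
section


variable {V : Type} [NormedAddCommGroup V] [InnerProductSpace ℝ V] [FiniteDimensional ℝ V]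
variable (C : RootSystemData V)

/-- the positive roots -/
def PosRoots : Finset V := C.Φ.filter (fun a => C.IsPos a)

theorem mem_posRoots {β : V} : β ∈ C.PosRoots ↔ β ∈ C.Φ ∧ C.IsPos β := by
  simp [PosRoots]

/-- the inversion set of `w` -/
def invSet (w : V ≃ₗ[ℝ] V) : Finset V := C.PosRoots.filter (fun β => C.IsNeg (w β))

theorem mem_invSet {w : V ≃ₗ[ℝ] V} {β : V} :
    β ∈ C.invSet w ↔ β ∈ C.Φ ∧ C.IsPos β ∧ C.IsNeg (w β) := by
  simp [invSet, mem_posRoots, and_assoc]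

theorem invSet_one : C.invSet 1 = ∅ := by
  ext β
  simp only [Finset.notMem_empty, iff_false, C.mem_invSet]
  rintro ⟨hβ, hpos, hneg⟩
  rw [one_apply] at hneg
  exact C.root_not_pos_and_neg hβ ⟨hpos, hneg⟩

theorem invSet_mul_s (w : V ≃ₗ[ℝ] V) (hw : w ∈ C.W) (i : Fin C.r)
    (hpos : C.IsPos (w (C.π i))) :
    C.invSet (w * C.s (C.π i)) =
      insert (C.π i) ((C.invSet w).image (C.s (C.π i))) := by
  ext β
  rw [C.mem_invSet, Finset.mem_insert, Finset.mem_image]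
  constructor
  · rintro ⟨hβΦ, hβpos, hβneg⟩
    rcases eq_or_ne β (C.π i) with rfl | hne
    · exact Or.inl rfl
    · right
      obtain ⟨hsΦ, hspos, _⟩ := C.s_simple_perm hβΦ hβpos i hne
      refine ⟨C.s (C.π i) β, ?_, C.s_s_apply (C.simple_mem i) β⟩
      rw [C.mem_invSet]
      refine ⟨hsΦ, hspos, ?_⟩
      have : (w * C.s (C.π i)) β = w (C.s (C.π i) β) := rfl
      rwa [this] at hβneg
  · rintro (rfl | ⟨γ, hγ, rfl⟩)
    · refine ⟨C.simple_mem i, C.isPos_simple i, ?_⟩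
      have h1 : (w * C.s (C.π i)) (C.π i) = w (C.s (C.π i) (C.π i)) := rfl
      rw [h1, C.s_apply_self (C.simple_mem i), map_neg]
      simpa [RootSystemData.IsNeg] using hpos
    · rw [C.mem_invSet] at hγ
      obtain ⟨hγΦ, hγpos, hγneg⟩ := hγ
      have hne : γ ≠ C.π i := by
        rintro rfl
        exact C.root_not_pos_and_neg (C.root_stable hw hγΦ) ⟨hpos, hγneg⟩
      obtain ⟨hsΦ, hspos, _⟩ := C.s_simple_perm hγΦ hγpos i hne
      refine ⟨hsΦ, hspos, ?_⟩
      have : (w * C.s (C.π i)) (C.s (C.π i) γ) = w (C.s (C.π i) (C.s (C.π i) γ)) := rfl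
      rw [this, C.s_s_apply (C.simple_mem i)]
      exact hγneg

/-- the number of inversions -/
def invNum (w : V ≃ₗ[ℝ] V) : ℕ := (C.invSet w).card

theorem invNum_mul_s_of_pos {w : V ≃ₗ[ℝ] V} (hw : w ∈ C.W) (i : Fin C.r)
    (hpos : C.IsPos (w (C.π i))) :
    C.invNum (w * C.s (C.π i)) = C.invNum w + 1 := by
  unfold invNum
  rw [C.invSet_mul_s w hw i hpos]
  have hinj : Set.InjOn (C.s (C.π i)) (C.invSet w) := fun a _ b _ h =>
    (C.s (C.π i)).injective h
  rw [Finset.card_insert_of_notMem, Finset.card_image_of_injOn hinj]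
  intro hmem
  rw [Finset.mem_image] at hmem
  obtain ⟨γ, hγ, hγeq⟩ := hmem
  have h2 := congrArg (C.s (C.π i)) hγeq
  rw [C.s_s_apply (C.simple_mem i), C.s_apply_self (C.simple_mem i)] at h2
  rw [C.mem_invSet] at hγ
  have hγneg : C.IsNeg γ := by
    rw [h2]
    simpa [RootSystemData.IsNeg] using C.isPos_simple i
  exact C.root_not_pos_and_neg hγ.1 ⟨hγ.2.1, hγneg⟩

theorem invNum_mul_s_of_neg {w : V ≃ₗ[ℝ] V} (hw : w ∈ C.W) (i : Fin C.r)
    (hneg : C.IsNeg (w (C.π i))) :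
    C.invNum (w * C.s (C.π i)) + 1 = C.invNum w := by
  set w' := w * C.s (C.π i) with hw'
  have hw'W : w' ∈ C.W := mul_mem hw (C.simple_s_mem_W i)
  have hpos : C.IsPos (w' (C.π i)) := by
    have h1 : w' (C.π i) = w (C.s (C.π i) (C.π i)) := rfl
    rw [h1, C.s_apply_self (C.simple_mem i), map_neg]
    exact hneg
  have := C.invNum_mul_s_of_pos hw'W i hpos
  have hww : w' * C.s (C.π i) = w := by
    rw [hw', mul_assoc, C.s_mul_self (C.simple_mem i), mul_one]
  rw [hww] at this
  omega

/-- `n(w) = ℓ(w)` -/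
theorem invNum_eq_length {w : V ≃ₗ[ℝ] V} (hw : w ∈ C.W) : C.invNum w = C.length w := by
  generalize hn : C.length w = n
  induction n using Nat.strong_induction_on generalizing w with
  | _ n ih =>
    rcases Nat.eq_zero_or_pos n with rfl | hpos
    · have : w = 1 := C.eq_one_of_length_zero hw hn
      rw [this]
      unfold invNum
      rw [C.invSet_one]
      simp
    · obtain ⟨l, hlen, hprod⟩ := C.exists_reduced_word hw
      have hlne : l ≠ [] := by
        intro h
        rw [h] at hlen
        simp at hlen
        omega
      rcases List.eq_nil_or_concat l with rfl | ⟨l', i, rfl⟩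
      · exact absurd rfl hlne
      rw [List.concat_eq_append] at hlen hprod
      have hw' : C.wordProd l' * C.s (C.π i) = w := by
        rw [← hprod, C.wordProd_append, C.wordProd_singleton]
      have hlen' : l'.length + 1 = n := by
        rw [← hn, ← hlen]
        simp
      -- ℓ(w s_i) < ℓ(w)
      have hws : w * C.s (C.π i) = C.wordProd l' := by
        rw [← hw', mul_assoc, C.s_mul_self (C.simple_mem i), mul_one]
      have hlews : C.length (w * C.s (C.π i)) ≤ l'.length := by
        rw [hws]
        exact C.length_le l' rfl
      have hlt : C.length (w * C.s (C.π i)) < C.length w := by omega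
      have hneg : C.IsNeg (w (C.π i)) :=
        (C.length_s_lt_iff hw (C.simple_mem i) (C.isPos_simple i)).1 hlt
      -- ℓ(w s_i) = n - 1
      have hge : C.length w ≤ C.length (w * C.s (C.π i)) + 1 := by
        have h2 : w = (w * C.s (C.π i)) * C.s (C.π i) := by
          rw [mul_assoc, C.s_mul_self (C.simple_mem i), mul_one]
        obtain ⟨m, hmlen, hmprod⟩ :=
          C.exists_reduced_word (mul_mem hw (C.simple_s_mem_W i))
        have : C.wordProd (m ++ [i]) = w := by
          rw [C.wordProd_append, C.wordProd_singleton, hmprod, ← h2]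
        have h3 := C.length_le _ this
        rw [List.length_append, hmlen] at h3
        simpa using h3
      have heq : C.length (w * C.s (C.π i)) = n - 1 := by omega
      have hIH := ih (n-1) (by omega) (mul_mem hw (C.simple_s_mem_W i)) heq
      have hcount := C.invNum_mul_s_of_neg hw i hneg
      omega

theorem exists_descent {w : V ≃ₗ[ℝ] V} (hw : w ∈ C.W) (hne : w ≠ 1) :
    ∃ i : Fin C.r, C.IsNeg (w (C.π i)) ∧
      C.length (w * C.s (C.π i)) + 1 = C.length w := by
  obtain ⟨l, hlen, hprod⟩ := C.exists_reduced_word hw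
  have hlne : l ≠ [] := by
    intro h
    rw [h] at hprod
    rw [C.wordProd_nil] at hprod
    exact hne hprod.symm
  rcases List.eq_nil_or_concat l with rfl | ⟨l', i, rfl⟩
  · exact absurd rfl hlne
  rw [List.concat_eq_append] at hlen hprod
  have hw' : C.wordProd l' * C.s (C.π i) = w := by
    rw [← hprod, C.wordProd_append, C.wordProd_singleton]
  have hws : w * C.s (C.π i) = C.wordProd l' := by
    rw [← hw', mul_assoc, C.s_mul_self (C.simple_mem i), mul_one]
  have hlews : C.length (w * C.s (C.π i)) ≤ l'.length := by
    rw [hws]; exact C.length_le l' rfl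
  have hlen' : l'.length + 1 = C.length w := by rw [← hlen]; simp
  have hlt : C.length (w * C.s (C.π i)) < C.length w := by omega
  have hneg : C.IsNeg (w (C.π i)) :=
    (C.length_s_lt_iff hw (C.simple_mem i) (C.isPos_simple i)).1 hlt
  have hge : C.length w ≤ C.length (w * C.s (C.π i)) + 1 := by
    obtain ⟨m, hmlen, hmprod⟩ :=
      C.exists_reduced_word (mul_mem hw (C.simple_s_mem_W i))
    have h2 : C.wordProd (m ++ [i]) = w := by
      rw [C.wordProd_append, C.wordProd_singleton, hmprod, mul_assoc,
        C.s_mul_self (C.simple_mem i), mul_one]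
    have h3 := C.length_le _ h2
    rw [List.length_append, hmlen] at h3
    simpa using h3
  exact ⟨i, hneg, by omega⟩

theorem length_le_card_posRoots {w : V ≃ₗ[ℝ] V} (hw : w ∈ C.W) :
    C.length w ≤ C.PosRoots.card := by
  rw [← C.invNum_eq_length hw]
  exact Finset.card_le_card (Finset.filter_subset _ _)

theorem eq_one_of_no_inversion {w : V ≃ₗ[ℝ] V} (hw : w ∈ C.W)
    (h : ∀ β ∈ C.Φ, C.IsPos β → C.IsPos (w β)) : w = 1 := by
  have : C.invSet w = ∅ := by
    ext β
    simp only [Finset.notMem_empty, iff_false, C.mem_invSet]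
    rintro ⟨h1, h2, h3⟩
    exact C.root_not_pos_and_neg (C.root_stable hw h1) ⟨h β h1 h2, h3⟩
  have h2 : C.invNum w = 0 := by rw [invNum, this]; simp
  rw [C.invNum_eq_length hw] at h2
  exact C.eq_one_of_length_zero hw h2


end
end RootSystemData

namespace RootSystemData
section


variable {V : Type} [NormedAddCommGroup V] [InnerProductSpace ℝ V] [FiniteDimensional ℝ V]
variable (C : RootSystemData V)

theorem inner_coord (y x : V) : ⟪y, x⟫_ℝ = ∑ j, C.coord x j * ⟪y, C.π j⟫_ℝ := by
  conv_lhs => rw [C.eq_sum_coord x]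
  rw [inner_sum]
  congr 1; ext j; rw [real_inner_smul_right]

/-! ### finiteness of bounded subsets of the lattice -/

theorem X_ball_finite (cc : ℝ) : {x : V | x ∈ C.X ∧ ⟪x, x⟫_ℝ ≤ cc}.Finite := by
  set S := {x : V | x ∈ C.X ∧ ⟪x, x⟫_ℝ ≤ cc} with hS
  have hrep : ∀ x ∈ S, ∀ i : Fin C.r, ∃ n : ℤ, pairing x (C.π i) = n := by
    intro x hx i
    exact C.pairing_int hx.1 i
  set F : V → (Fin C.r → ℤ) := fun x i =>
    if h : ∃ n : ℤ, pairing x (C.π i) = n then h.choose else 0 with hF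
  have hFval : ∀ x ∈ S, ∀ i, ((F x i : ℤ) : ℝ) = pairing x (C.π i) := by
    intro x hx i
    have h := hrep x hx i
    rw [hF]
    simp only [dif_pos h]
    exact h.choose_spec.symm
  have hinj : Set.InjOn F S := by
    intro x hx y hy hxy
    have : ∀ i, pairing x (C.π i) = pairing y (C.π i) := by
      intro i
      rw [← hFval x hx i, ← hFval y hy i, hxy]
    calc x = ∑ j, pairing x (C.π j) • C.ω j := C.eq_sum_pairing_omega x
    _ = ∑ j, pairing y (C.π j) • C.ω j := by congr 1; ext j; rw [this j]
    _ = y := (C.eq_sum_pairing_omega y).symm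
  set B : Fin C.r → ℤ := fun i => ⌈4 * max cc 0 / ⟪C.π i, C.π i⟫_ℝ⌉ with hB
  have himg : F '' S ⊆ Set.pi Set.univ (fun i => Set.Icc (-(B i)) (B i)) := by
    rintro _ ⟨x, hx, rfl⟩
    intro i _
    have hP := C.root_inner_pos (C.simple_mem i)
    have hcs : |⟪x, C.π i⟫_ℝ| ≤ ‖x‖ * ‖C.π i‖ := abs_real_inner_le_norm x (C.π i)
    have hxx : ⟪x, x⟫_ℝ = ‖x‖ * ‖x‖ := real_inner_self_eq_norm_mul_norm x
    have hsq : (pairing x (C.π i))^2 ≤ 4 * max cc 0 / ⟪C.π i, C.π i⟫_ℝ := by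
      have h1 : (pairing x (C.π i))^2 = 4 * ⟪x, C.π i⟫_ℝ^2 / ⟪C.π i, C.π i⟫_ℝ^2 := by
        unfold pairing; field_simp; ring
      rw [h1]
      rw [div_le_div_iff₀ (by positivity) hP]
      have h2 : ⟪x, C.π i⟫_ℝ^2 ≤ (‖x‖ * ‖C.π i‖)^2 := by
        nlinarith [sq_abs (⟪x, C.π i⟫_ℝ), abs_nonneg (⟪x, C.π i⟫_ℝ), norm_nonneg x,
          norm_nonneg (C.π i)]
      have h3 : ‖x‖ * ‖x‖ ≤ max cc 0 := by
        rw [← hxx]; exact le_trans hx.2 (le_max_left _ _)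
      have hππ : ⟪C.π i, C.π i⟫_ℝ = ‖C.π i‖ * ‖C.π i‖ := real_inner_self_eq_norm_mul_norm _
      have h4 : ⟪x, C.π i⟫_ℝ^2 ≤ (max cc 0) * ⟪C.π i, C.π i⟫_ℝ := by
        rw [hππ]
        nlinarith [h2, h3, mul_nonneg (norm_nonneg (C.π i)) (norm_nonneg (C.π i)),
          mul_le_mul_of_nonneg_right h3
            (mul_nonneg (norm_nonneg (C.π i)) (norm_nonneg (C.π i)))]
      nlinarith [mul_le_mul_of_nonneg_right h4 hP.le, hP]
    obtain ⟨n, hn⟩ := hrep x hx i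
    have hFxi : F x i = n := by
      have := hFval x hx i
      rw [hn] at this
      exact_mod_cast this
    have hn2 : (n:ℝ)^2 ≤ 4 * max cc 0 / ⟪C.π i, C.π i⟫_ℝ := by rw [← hn]; exact hsq
    have hnB : n^2 ≤ B i := by
      rw [hB]
      have hcast : ((n^2 : ℤ) : ℝ) ≤ 4 * max cc 0 / ⟪C.π i, C.π i⟫_ℝ := by
        exact_mod_cast hn2
      exact_mod_cast le_trans hcast (Int.le_ceil _)
    have habs : |n| ≤ n^2 := by
      rcases eq_or_ne n 0 with rfl | hne
      · simp
      · have h1 : 1 ≤ |n| := Int.one_le_abs hne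
        have h2 : |n| * |n| = n^2 := by rw [abs_mul_abs_self, sq]
        nlinarith
    have hband : -(B i) ≤ n ∧ n ≤ B i := abs_le.mp (le_trans habs hnB)
    simp only [Set.mem_Icc]
    rw [hFxi]
    exact hband
  have hpi : (Set.pi Set.univ (fun i => Set.Icc (-(B i)) (B i))).Finite :=
    Set.Finite.pi (fun i => Set.finite_Icc _ _)
  exact Set.Finite.of_finite_image (hpi.subset himg) hinj

/-! ### orbits -/

/-- the orbit of a vector under W -/
def orbitSet (x : V) : Set V := {y | ∃ g ∈ C.W, y = g x}

theorem self_mem_orbitSet (x : V) : x ∈ C.orbitSet x := ⟨1, one_mem _, rfl⟩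

theorem orbitSet_stable {x y : V} (hy : y ∈ C.orbitSet x) {g : V ≃ₗ[ℝ] V} (hg : g ∈ C.W) :
    g y ∈ C.orbitSet x := by
  obtain ⟨h, hh, rfl⟩ := hy
  exact ⟨g * h, mul_mem hg hh, rfl⟩

theorem orbitSet_norm {x y : V} (hy : y ∈ C.orbitSet x) : ⟪y, y⟫_ℝ = ⟪x, x⟫_ℝ := by
  obtain ⟨g, hg, rfl⟩ := hy
  exact C.inner_inv hg x x

theorem orbitSet_mem_X {x y : V} (hx : x ∈ C.X) (hy : y ∈ C.orbitSet x) : y ∈ C.X := by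
  obtain ⟨g, hg, rfl⟩ := hy
  exact C.X_stable g hg x hx

theorem orbitSet_finite {x : V} (hx : x ∈ C.X) : (C.orbitSet x).Finite := by
  apply (C.X_ball_finite ⟪x, x⟫_ℝ).subset
  intro y hy
  exact ⟨C.orbitSet_mem_X hx hy, (C.orbitSet_norm hy).le⟩

/-- existence of a dominant representative -/
theorem exists_dominant_rep {x : V} (hx : x ∈ C.X) :
    ∃ g ∈ C.W, C.IsDominant (g x) := by
  have hfin := C.orbitSet_finite hx
  have hne : (hfin.toFinset).Nonempty := ⟨x, hfin.mem_toFinset.2 (C.self_mem_orbitSet x)⟩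
  obtain ⟨y, hy, hymax⟩ := hfin.toFinset.exists_max_image (fun y => ⟪C.varpi, y⟫_ℝ) hne
  rw [Set.Finite.mem_toFinset] at hy
  obtain ⟨g, hg, rfl⟩ := hy
  refine ⟨g, hg, ?_⟩
  intro i
  by_contra h
  push_neg at h
  set y := g x with hy
  have hsy : C.s (C.π i) y ∈ C.orbitSet x :=
    C.orbitSet_stable ⟨g, hg, rfl⟩ (C.simple_s_mem_W i)
  have hgt : ⟪C.varpi, C.s (C.π i) y⟫_ℝ > ⟪C.varpi, y⟫_ℝ := by
    rw [C.s_simple_apply, inner_sub_right, real_inner_smul_right]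
    have := C.inner_varpi_simple_pos i
    nlinarith
  have := hymax _ (hfin.mem_toFinset.2 hsy)
  linarith

/-- Lemma D : `σ - wσ` lies in the positive cone for dominant `σ` -/
theorem dominant_sub_orbit {σ : V} (hσ : C.IsDominant σ) {w : V ≃ₗ[ℝ] V} (hw : w ∈ C.W) :
    C.IsPos (σ - w σ) := by
  generalize hn : C.length w = n
  induction n using Nat.strong_induction_on generalizing w with
  | _ n ih =>
    rcases eq_or_ne w 1 with rfl | hne
    · simpa using C.isPos_zero
    · obtain ⟨i, hneg, hlen⟩ := C.exists_descent hw hne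
      set w' := w * C.s (C.π i) with hw'
      have hw'W : w' ∈ C.W := mul_mem hw (C.simple_s_mem_W i)
      have hww' : w = w' * C.s (C.π i) := by
        rw [hw', mul_assoc, C.s_mul_self (C.simple_mem i), mul_one]
      have hIH : C.IsPos (σ - w' σ) := ih (C.length w') (by omega) hw'W rfl
      have hw'pos : C.IsPos (w' (C.π i)) := by
        rw [← C.length_s_gt_iff hw'W (C.simple_mem i) (C.isPos_simple i), ← hww']
        omega
      have hcomp : σ - w σ = (σ - w' σ) + pairing σ (C.π i) • w' (C.π i) := by
        rw [hww']
        have h1 : (w' * C.s (C.π i)) σ = w' (C.s (C.π i) σ) := rfl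
        rw [h1, C.s_simple_apply, map_sub, map_smul]
        abel
      rw [hcomp]
      exact C.isPos_add hIH (C.isPos_smul (hσ i) hw'pos)

theorem inner_dominant_orbit_le {ν σ : V} (hν : C.IsDominant ν) (hσ : C.IsDominant σ)
    {u : V ≃ₗ[ℝ] V} (hu : u ∈ C.W) : ⟪ν, u σ⟫_ℝ ≤ ⟪ν, σ⟫_ℝ := by
  have h1 := C.dominant_inner_pos_cone hν (C.dominant_sub_orbit hσ hu)
  rw [inner_sub_right] at h1
  linarith

/-- uniqueness of the dominant representative -/
theorem dominant_rep_unique {σ μ : V} (hσ : C.IsDominant σ) (hμ : C.IsDominant μ)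
    {w : V ≃ₗ[ℝ] V} (hw : w ∈ C.W) (heq : μ = w σ) : μ = σ := by
  have h1 : C.IsPos (σ - μ) := by rw [heq]; exact C.dominant_sub_orbit hσ hw
  have h2 : C.IsPos (μ - σ) := by
    have h3 : σ = w⁻¹ μ := by
      rw [heq, inv_apply_apply]
    rw [h3]
    exact C.dominant_sub_orbit hμ (inv_mem hw)
  have := C.isPos_pointed h2 (by rw [neg_sub]; exact h1)
  have h4 : μ = σ := by
    have := sub_eq_zero.mp this
    exact this
  exact h4

/-- monotonicity of dominant orbits along the Bruhat order -/
theorem bruhat_mono {a b : V ≃ₗ[ℝ] V} (ha : a ∈ C.W) (hab : C.BruhatLE a b)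
    {ν : V} (hν : C.IsDominant ν) :
    b ∈ C.W ∧ C.IsPos (a ν - b ν) ∧ (a = b ∨ C.length a < C.length b) := by
  induction hab with
  | refl => exact ⟨ha, by simpa using C.isPos_zero, Or.inl rfl⟩
  | tail hac hstep ih =>
      rename_i c b
      obtain ⟨hcW, hpos, hlen⟩ := ih
      obtain ⟨⟨α, hα, hb⟩, hlt⟩ := hstep
      -- normalize the root to be positive
      obtain ⟨β, hβ, hβpos, hsβ⟩ : ∃ β, β ∈ C.Φ ∧ C.IsPos β ∧ C.s α = C.s β := by
        rcases C.root_pos_or_neg hα with h | h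
        · exact ⟨α, hα, h, rfl⟩
        · exact ⟨-α, C.neg_root_mem hα, h, (C.s_neg hα).symm⟩
      rw [hsβ] at hb
      have hbW : b ∈ C.W := by rw [hb]; exact mul_mem hcW (C.s_mem_W hβ)
      have hlb : C.length c < C.length b := by rw [hb] at hlt ⊢; exact hlt
      have hcβ : C.IsPos (c β) := by
        rw [← C.length_s_gt_iff hcW hβ hβpos, ← hb]
        exact hlb
      have hstep2 : C.IsPos (c ν - b ν) := by
        have h1 : b ν = c (C.s β ν) := by rw [hb]; rfl
        rw [h1, C.s_apply'' hβ, map_sub, map_smul]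
        have h2 : c ν - (c ν - pairing ν β • c β) = pairing ν β • c β := by abel
        rw [h2]
        apply C.isPos_smul _ hcβ
        have h3 := C.dominant_inner_pos_cone hν hβpos
        have h4 := C.root_inner_pos hβ
        unfold pairing
        positivity
      refine ⟨hbW, ?_, ?_⟩
      · have : a ν - b ν = (a ν - c ν) + (c ν - b ν) := by abel
        rw [this]
        exact C.isPos_add hpos hstep2
      · right
        rcases hlen with rfl | h
        · exact hlb
        · omega

theorem bruhat_mem_W {a b : V ≃ₗ[ℝ] V} (ha : a ∈ C.W) (hab : C.BruhatLE a b) : b ∈ C.W :=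
  (C.bruhat_mono ha hab (ν := 0) (by intro i; simp [pairing])).1

theorem bruhat_length_lt {a b : V ≃ₗ[ℝ] V} (ha : a ∈ C.W) (hab : C.BruhatLE a b)
    (hne : a ≠ b) : C.length a < C.length b := by
  rcases (C.bruhat_mono ha hab (ν := 0) (by intro i; simp [pairing])).2.2 with h | h
  · exact absurd h hne
  · exact h

/-- fixing lemma -/
theorem s_fix_of_pairing_zero {x : V} (i : Fin C.r) (h : pairing x (C.π i) = 0) :
    C.s (C.π i) x = x := by
  rw [C.s_simple_apply, h, zero_smul, sub_zero]

/-- **Stabilizer decomposition**: if `⟪ν, uσ⟫ = ⟪ν, σ⟫` with `ν, σ` dominant, `σ ∈ X`,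
then `u = pq` with `p` fixing `ν` and `q` fixing `σ`. -/
theorem stab_decomp {ν σ : V} (hν : C.IsDominant ν) (hσ : C.IsDominant σ) (hσX : σ ∈ C.X)
    {u : V ≃ₗ[ℝ] V} (hu : u ∈ C.W) (heq : ⟪ν, u σ⟫_ℝ = ⟪ν, σ⟫_ℝ) :
    ∃ p q : V ≃ₗ[ℝ] V, p ∈ C.W ∧ q ∈ C.W ∧ p ν = ν ∧ q σ = σ ∧ u = p * q := by
  have hfin := C.orbitSet_finite hσX
  generalize hm : (hfin.toFinset.filter (fun y => ⟪C.varpi, u σ⟫_ℝ < ⟪C.varpi, y⟫_ℝ)).card = m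
  induction m using Nat.strong_induction_on generalizing u with
  | _ m ih =>
    by_cases hdom : C.IsDominant (u σ)
    · have : u σ = σ := C.dominant_rep_unique hσ hdom hu rfl
      exact ⟨1, u, one_mem _, hu, by rw [one_apply], this, by rw [one_mul]⟩
    · -- find a simple root with negative pairing
      have hex : ∃ i, pairing (u σ) (C.π i) < 0 := by
        by_contra h
        push_neg at h
        exact hdom (fun i => h i)
      obtain ⟨i, hi⟩ := hex
      -- ⟪ν, π i⟫ = 0
      have hD1 : C.IsPos (σ - u σ) := C.dominant_sub_orbit hσ hu
      have hD2 : C.IsPos (σ - (C.s (C.π i) * u) σ) :=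
        C.dominant_sub_orbit hσ (mul_mem (C.simple_s_mem_W i) hu)
      have hkey : σ - (C.s (C.π i) * u) σ = (σ - u σ) + pairing (u σ) (C.π i) • C.π i := by
        have h1 : (C.s (C.π i) * u) σ = C.s (C.π i) (u σ) := rfl
        rw [h1, C.s_simple_apply]
        abel
      have hci : 0 < C.coord (σ - u σ) i := by
        have hc2 := C.coord_nonneg_of_isPos hD2 i
        rw [hkey, C.coord_add, C.coord_smul] at hc2
        have hπii : C.coord (C.π i) i = 1 := by
          have h2 : (∑ k, (fun k => if k = i then (1:ℝ) else 0) k • C.π k) = C.π i := by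
            rw [Finset.sum_eq_single i] <;> simp +contextual
          have := C.coord_of_sum (fun k => if k = i then (1:ℝ) else 0) i
          rw [h2] at this; rw [this]; simp
        rw [hπii, mul_one] at hc2
        linarith
      have hzero : ⟪ν, σ - u σ⟫_ℝ = 0 := by
        rw [inner_sub_right, heq]; ring
      have hterm : ∀ j ∈ Finset.univ, 0 ≤ C.coord (σ - u σ) j * ⟪ν, C.π j⟫_ℝ := by
        intro j _
        apply mul_nonneg (C.coord_nonneg_of_isPos hD1 j)
        rw [C.inner_eq_pairing ν (C.simple_mem j)]
        have := hν j
        have := (C.root_inner_pos (C.simple_mem j)).le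
        positivity
      have hsum0 : ∑ j, C.coord (σ - u σ) j * ⟪ν, C.π j⟫_ℝ = 0 := by
        rw [← C.inner_coord ν (σ - u σ)]
        exact hzero
      have hiz : C.coord (σ - u σ) i * ⟪ν, C.π i⟫_ℝ = 0 :=
        (Finset.sum_eq_zero_iff_of_nonneg hterm).1 hsum0 i (Finset.mem_univ i)
      have hνπi : ⟪ν, C.π i⟫_ℝ = 0 := by
        rcases mul_eq_zero.1 hiz with h | h
        · linarith
        · exact h
      have hνpair : pairing ν (C.π i) = 0 := by
        unfold pairing
        rw [hνπi]
        simp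
      have hsiν : C.s (C.π i) ν = ν := C.s_fix_of_pairing_zero i hνpair
      -- recurse with u' = s_i u
      set u' := C.s (C.π i) * u with hu'
      have hu'W : u' ∈ C.W := mul_mem (C.simple_s_mem_W i) hu
      have heq' : ⟪ν, u' σ⟫_ℝ = ⟪ν, σ⟫_ℝ := by
        have h1 : u' σ = C.s (C.π i) (u σ) := rfl
        rw [h1, ← hsiν, C.inner_inv (C.simple_s_mem_W i), hsiν, heq]
      have hgt : ⟪C.varpi, u σ⟫_ℝ < ⟪C.varpi, u' σ⟫_ℝ := by
        have h1 : u' σ = C.s (C.π i) (u σ) := rfl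
        rw [h1, C.s_simple_apply, inner_sub_right, real_inner_smul_right]
        have := C.inner_varpi_simple_pos i
        nlinarith
      have hmem' : u' σ ∈ hfin.toFinset := by
        rw [Set.Finite.mem_toFinset]
        exact ⟨u', hu'W, rfl⟩
      have hcard : (hfin.toFinset.filter
          (fun y => ⟪C.varpi, u' σ⟫_ℝ < ⟪C.varpi, y⟫_ℝ)).card < m := by
        rw [← hm]
        apply Finset.card_lt_card
        constructor
        · intro y hy
          rw [Finset.mem_filter] at hy ⊢
          exact ⟨hy.1, lt_trans hgt hy.2⟩
        · intro hcon
          have h2 : u' σ ∈ hfin.toFinset.filter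
              (fun y => ⟪C.varpi, u σ⟫_ℝ < ⟪C.varpi, y⟫_ℝ) := by
            rw [Finset.mem_filter]
            exact ⟨hmem', hgt⟩
          have := hcon h2
          rw [Finset.mem_filter] at this
          exact lt_irrefl _ this.2
      obtain ⟨p', q', hp'W, hq'W, hp'ν, hq'σ, hu'eq⟩ := ih _ hcard hu'W heq' rfl
      refine ⟨C.s (C.π i) * p', q', mul_mem (C.simple_s_mem_W i) hp'W, hq'W, ?_, hq'σ, ?_⟩
      · have h1 : (C.s (C.π i) * p') ν = C.s (C.π i) (p' ν) := rfl
        rw [h1, hp'ν, hsiν]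
      · have h2 : C.s (C.π i) * u' = u := by
          rw [hu', ← mul_assoc, C.s_mul_self (C.simple_mem i), one_mul]
        rw [← h2, hu'eq, mul_assoc]


end
end RootSystemData

namespace RootSystemData
section


variable {V : Type} [NormedAddCommGroup V] [InnerProductSpace ℝ V] [FiniteDimensional ℝ V]
variable (C : RootSystemData V)

theorem pairing_neg_right (x α : V) : pairing x (-α) = - pairing x α := by
  simp [pairing, inner_neg_right, inner_neg_neg, neg_div, mul_neg]

/-- `x` is supported on the simple roots in `J` -/
def InJSpan (J : Set (Fin C.r)) (x : V) : Prop := ∀ j, j ∉ J → C.coord x j = 0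

theorem coord_simple_self (i : Fin C.r) : C.coord (C.π i) i = 1 := by
  have h2 : (∑ k, (fun k => if k = i then (1:ℝ) else 0) k • C.π k) = C.π i := by
    rw [Finset.sum_eq_single i] <;> simp +contextual
  have := C.coord_of_sum (fun k => if k = i then (1:ℝ) else 0) i
  rw [h2] at this; rw [this]; simp

theorem coord_simple_ne {i j : Fin C.r} (h : j ≠ i) : C.coord (C.π i) j = 0 := by
  have h2 : (∑ k, (fun k => if k = i then (1:ℝ) else 0) k • C.π k) = C.π i := by
    rw [Finset.sum_eq_single i] <;> simp +contextual
  have := C.coord_of_sum (fun k => if k = i then (1:ℝ) else 0) j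
  rw [h2] at this; rw [this]; simp [h]

/-- a parabolic word: every element of `parabolicSubgroup J` is a product of `s i`, `i ∈ J` -/
theorem parabolic_word {J : Set (Fin C.r)} {q : V ≃ₗ[ℝ] V} (hq : q ∈ C.parabolicSubgroup J) :
    ∃ l : List (Fin C.r), (∀ i ∈ l, i ∈ J) ∧ C.wordProd l = q := by
  induction hq using Subgroup.closure_induction with
  | mem x hx =>
      obtain ⟨i, hi, rfl⟩ := hx
      exact ⟨[i], by simpa using hi, C.wordProd_singleton i⟩
  | one => exact ⟨[], by simp, C.wordProd_nil⟩
  | mul x y _ _ hx hy =>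
      obtain ⟨l, hl, hlp⟩ := hx
      obtain ⟨l', hl', hlp'⟩ := hy
      refine ⟨l ++ l', ?_, by rw [C.wordProd_append, hlp, hlp']⟩
      intro i hi
      rcases List.mem_append.1 hi with h | h
      · exact hl i h
      · exact hl' i h
  | inv x _ hx =>
      obtain ⟨l, hl, hlp⟩ := hx
      refine ⟨l.reverse, ?_, by rw [C.wordProd_reverse, hlp]⟩
      intro i hi
      exact hl i (List.mem_reverse.1 hi)

theorem s_mem_parabolic {J : Set (Fin C.r)} {i : Fin C.r} (hi : i ∈ J) :
    C.s (C.π i) ∈ C.parabolicSubgroup J :=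
  Subgroup.subset_closure ⟨i, hi, rfl⟩

/-- a letter in `J` preserves the coordinates outside `J` -/
theorem s_simple_coord_nonJ {J : Set (Fin C.r)} {i : Fin C.r} (hi : i ∈ J) (x : V)
    {j : Fin C.r} (hj : j ∉ J) : C.coord (C.s (C.π i) x) j = C.coord x j :=
  C.coord_s_simple i x (fun h => hj (h ▸ hi))

theorem wordProdJ_coord_nonJ {J : Set (Fin C.r)} (l : List (Fin C.r))
    (hl : ∀ i ∈ l, i ∈ J) (x : V) {j : Fin C.r} (hj : j ∉ J) :
    C.coord (C.wordProd l x) j = C.coord x j := by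
  induction l with
  | nil => rw [C.wordProd_nil, one_apply]
  | cons i t ih =>
      have h1 : C.wordProd (i :: t) x = C.s (C.π i) (C.wordProd t x) := by
        rw [C.wordProd_cons]; rfl
      rw [h1, C.s_simple_coord_nonJ (hl i (List.mem_cons_self)) _ hj,
        ih (fun k hk => hl k (List.mem_cons_of_mem i hk))]

theorem parabolic_coord_nonJ {J : Set (Fin C.r)} {q : V ≃ₗ[ℝ] V}
    (hq : q ∈ C.parabolicSubgroup J) (x : V) {j : Fin C.r} (hj : j ∉ J) :
    C.coord (q x) j = C.coord x j := by
  obtain ⟨l, hl, rfl⟩ := C.parabolic_word hq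
  exact C.wordProdJ_coord_nonJ l hl x hj

theorem parabolic_inJSpan {J : Set (Fin C.r)} {q : V ≃ₗ[ℝ] V}
    (hq : q ∈ C.parabolicSubgroup J) {x : V} (hx : C.InJSpan J x) : C.InJSpan J (q x) := by
  intro j hj
  rw [C.parabolic_coord_nonJ hq x hj]
  exact hx j hj

theorem parabolic_mem_W {J : Set (Fin C.r)} {q : V ≃ₗ[ℝ] V}
    (hq : q ∈ C.parabolicSubgroup J) : q ∈ C.W := C.parabolic_le J hq

/-- a parabolic element preserves positive roots not supported on `J` -/
theorem parabolic_preserves_nonJ {J : Set (Fin C.r)} {q : V ≃ₗ[ℝ] V}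
    (hq : q ∈ C.parabolicSubgroup J) {β : V} (hβ : β ∈ C.Φ) (hpos : C.IsPos β)
    (hns : ¬ C.InJSpan J β) :
    q β ∈ C.Φ ∧ C.IsPos (q β) ∧ ¬ C.InJSpan J (q β) := by
  have hmem : q β ∈ C.Φ := C.root_stable (C.parabolic_mem_W hq) hβ
  obtain ⟨j, hj, hjne⟩ : ∃ j, j ∉ J ∧ C.coord β j ≠ 0 := by
    by_contra h
    push_neg at h
    exact hns (fun j hj => h j hj)
  have hjpos : 0 < C.coord β j := (C.coord_nonneg_of_isPos hpos j).lt_of_ne (Ne.symm hjne)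
  have hcoord : C.coord (q β) j = C.coord β j := C.parabolic_coord_nonJ hq β hj
  refine ⟨hmem, ?_, ?_⟩
  · rcases C.root_pos_or_neg hmem with h | h
    · exact h
    · have := C.coord_nonpos_of_isNeg h j
      rw [hcoord] at this
      linarith
  · intro hcon
    have := hcon j hj
    rw [hcoord] at this
    exact hjne this

/-- parabolic elements fix vectors orthogonal to `J` -/
theorem wordProdJ_fix {J : Set (Fin C.r)} (l : List (Fin C.r)) (hl : ∀ i ∈ l, i ∈ J)
    {x : V} (hx : ∀ i ∈ J, pairing x (C.π i) = 0) :
    C.wordProd l x = x := by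
  induction l with
  | nil => rw [C.wordProd_nil, one_apply]
  | cons i t ih =>
      have h1 : C.wordProd (i :: t) x = C.s (C.π i) (C.wordProd t x) := by
        rw [C.wordProd_cons]; rfl
      rw [h1, ih (fun k hk => hl k (List.mem_cons_of_mem i hk)),
        C.s_fix_of_pairing_zero i (hx i (hl i (List.mem_cons_self)))]

theorem parabolic_fix {J : Set (Fin C.r)} {q : V ≃ₗ[ℝ] V}
    (hq : q ∈ C.parabolicSubgroup J) {x : V} (hx : ∀ i ∈ J, pairing x (C.π i) = 0) :
    q x = x := by
  obtain ⟨l, hl, rfl⟩ := C.parabolic_word hq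
  exact C.wordProdJ_fix l hl hx

/-- a `J`-minimal element sends `J`-supported positive roots to positive roots -/
theorem jmin_maps_pos {J : Set (Fin C.r)} {u : V ≃ₗ[ℝ] V} (hu : u ∈ C.W)
    (hmin : ∀ i ∈ J, C.IsPos (u (C.π i))) {β : V} (hβ : β ∈ C.Φ) (hpos : C.IsPos β)
    (hspan : C.InJSpan J β) : C.IsPos (u β) := by
  have h1 : u β = ∑ j, C.coord β j • u (C.π j) := by
    conv_lhs => rw [C.eq_sum_coord β]
    rw [map_sum]
    congr 1; ext j; rw [map_smul]
  rw [h1]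
  apply C.isPos_sum
  intro j _
  by_cases hj : j ∈ J
  · exact C.isPos_smul (C.coord_nonneg_of_isPos hpos j) (hmin j hj)
  · rw [hspan j hj, zero_smul]
    exact C.isPos_zero

/-- key counting: for `u` J-minimal and `q ∈ W_J`, `invSet (u q) = invSet q ⊔ q⁻¹ invSet u` -/
theorem invSet_jmin_mul {J : Set (Fin C.r)} {u q : V ≃ₗ[ℝ] V} (hu : u ∈ C.W)
    (hmin : ∀ i ∈ J, C.IsPos (u (C.π i))) (hq : q ∈ C.parabolicSubgroup J) :
    C.invSet (u * q) = C.invSet q ∪ (C.invSet u).image ⇑q⁻¹ ∧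
      Disjoint (C.invSet q) ((C.invSet u).image ⇑q⁻¹) := by
  have hqW : q ∈ C.W := C.parabolic_mem_W hq
  have hqinv : q⁻¹ ∈ C.parabolicSubgroup J := inv_mem hq
  -- inversions of q are J-supported
  have hNq : ∀ β ∈ C.invSet q, C.InJSpan J β := by
    intro β hβ
    rw [C.mem_invSet] at hβ
    by_contra h
    obtain ⟨_, hp, _⟩ := C.parabolic_preserves_nonJ hq hβ.1 hβ.2.1 h
    exact C.root_not_pos_and_neg (C.root_stable hqW hβ.1) ⟨hp, hβ.2.2⟩
  -- inversions of u are not J-supported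
  have hNu : ∀ γ ∈ C.invSet u, ¬ C.InJSpan J γ := by
    intro γ hγ hcon
    rw [C.mem_invSet] at hγ
    exact C.root_not_pos_and_neg (C.root_stable hu hγ.1)
      ⟨C.jmin_maps_pos hu hmin hγ.1 hγ.2.1 hcon, hγ.2.2⟩
  constructor
  · ext β
    rw [C.mem_invSet, Finset.mem_union, Finset.mem_image]
    constructor
    · rintro ⟨hβΦ, hβpos, hβneg⟩
      have huq : (u * q) β = u (q β) := rfl
      have hqβ : q β ∈ C.Φ := C.root_stable hqW hβΦ
      rcases C.root_pos_or_neg hqβ with h | h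
      · -- q β positive, so it is an inversion of u
        right
        refine ⟨q β, ?_, inv_apply_apply β⟩
        rw [C.mem_invSet]
        rw [huq] at hβneg
        exact ⟨hqβ, h, hβneg⟩
      · left
        rw [C.mem_invSet]
        exact ⟨hβΦ, hβpos, h⟩
    · rintro (h | ⟨γ, hγ, rfl⟩)
      · rw [C.mem_invSet] at h
        obtain ⟨hβΦ, hβpos, hβneg⟩ := h
        refine ⟨hβΦ, hβpos, ?_⟩
        have huq : (u * q) β = u (q β) := rfl
        rw [huq]
        -- q β is a negative J-supported root, u maps -qβ to positive
        have hqβ : q β ∈ C.Φ := C.root_stable hqW hβΦ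
        have hInJ : C.InJSpan J β := hNq β (by rw [C.mem_invSet]; exact ⟨hβΦ, hβpos, hβneg⟩)
        have hqInJ : C.InJSpan J (q β) := C.parabolic_inJSpan hq hInJ
        have hnegmem : -(q β) ∈ C.Φ := C.neg_root_mem hqβ
        have hnegInJ : C.InJSpan J (-(q β)) := by
          intro j hj
          rw [C.coord_neg, hqInJ j hj, neg_zero]
        have : C.IsPos (u (-(q β))) :=
          C.jmin_maps_pos hu hmin hnegmem hβneg hnegInJ
        rw [map_neg] at this
        exact this
      · rw [C.mem_invSet] at hγ
        obtain ⟨hγΦ, hγpos, hγneg⟩ := hγ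
        have hns : ¬ C.InJSpan J γ := hNu γ (by rw [C.mem_invSet]; exact ⟨hγΦ, hγpos, hγneg⟩)
        obtain ⟨h1, h2, _⟩ := C.parabolic_preserves_nonJ hqinv hγΦ hγpos hns
        refine ⟨h1, h2, ?_⟩
        have huq : (u * q) (q⁻¹ γ) = u (q (q⁻¹ γ)) := rfl
        rw [huq, apply_inv_apply]
        exact hγneg
  · rw [Finset.disjoint_left]
    intro β hβ hβ'
    rw [Finset.mem_image] at hβ'
    obtain ⟨γ, hγ, rfl⟩ := hβ'
    have h1 := hNq _ hβ
    have h2 := hNu γ hγ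
    apply h2
    have : γ = q (q⁻¹ γ) := (apply_inv_apply γ).symm
    rw [this]
    exact C.parabolic_inJSpan hq h1

/-- length is additive: `ℓ(uq) = ℓ(u) + ℓ(q)` for `u` J-minimal, `q ∈ W_J` -/
theorem length_jmin_mul {J : Set (Fin C.r)} {u q : V ≃ₗ[ℝ] V} (hu : u ∈ C.W)
    (hmin : ∀ i ∈ J, C.IsPos (u (C.π i))) (hq : q ∈ C.parabolicSubgroup J) :
    C.length (u * q) = C.length u + C.length q := by
  have hqW : q ∈ C.W := C.parabolic_mem_W hq
  obtain ⟨hset, hdisj⟩ := C.invSet_jmin_mul hu hmin hq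
  have h1 : C.invNum (u * q) = C.invNum q + C.invNum u := by
    unfold invNum
    rw [hset, Finset.card_union_of_disjoint hdisj,
      Finset.card_image_of_injective _ (q⁻¹ : V ≃ₗ[ℝ] V).injective]
  rw [← C.invNum_eq_length (mul_mem hu hqW), ← C.invNum_eq_length hu,
    ← C.invNum_eq_length hqW, h1]
  omega

/-- a nontrivial parabolic element has a descent in `J` -/
theorem parabolic_descent {J : Set (Fin C.r)} {q : V ≃ₗ[ℝ] V}
    (hq : q ∈ C.parabolicSubgroup J) (hne : q ≠ 1) :
    ∃ i ∈ J, C.IsNeg (q (C.π i)) := by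
  by_contra h
  push_neg at h
  apply hne
  apply C.eq_one_of_no_inversion (C.parabolic_mem_W hq)
  intro β hβ hβpos
  by_cases hspan : C.InJSpan J β
  · apply C.jmin_maps_pos (C.parabolic_mem_W hq) _ hβ hβpos hspan
    intro i hi
    rcases C.root_pos_or_neg (C.root_stable (C.parabolic_mem_W hq) (C.simple_mem i)) with
      h' | h'
    · exact h'
    · exact absurd h' (h i hi)
  · exact (C.parabolic_preserves_nonJ hq hβ hβpos hspan).2.1

/-- Bruhat chain from a J-minimal element up through its coset -/
theorem bruhat_jmin_le {J : Set (Fin C.r)} {u q : V ≃ₗ[ℝ] V} (hu : u ∈ C.W)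
    (hmin : ∀ i ∈ J, C.IsPos (u (C.π i))) (hq : q ∈ C.parabolicSubgroup J) :
    C.BruhatLE u (u * q) := by
  have hqW : q ∈ C.W := C.parabolic_mem_W hq
  generalize hn : C.length q = n
  induction n using Nat.strong_induction_on generalizing q with
  | _ n ih =>
    rcases eq_or_ne q 1 with rfl | hne
    · rw [mul_one]
      exact Relation.ReflTransGen.refl
    · obtain ⟨i, hi, hineg⟩ := C.parabolic_descent hq hne
      set q' := q * C.s (C.π i) with hq'
      have hq'mem : q' ∈ C.parabolicSubgroup J :=
        mul_mem hq (C.s_mem_parabolic hi)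
      have hq'W : q' ∈ C.W := C.parabolic_mem_W hq'mem
      have hlt : C.length q' < C.length q :=
        C.length_mul_s_lt_of_neg hqW (C.simple_mem i) (C.isPos_simple i) hineg
      have hchain : C.BruhatLE u (u * q') := ih (C.length q') (by omega) hq'mem hq'W rfl
      have hstep : C.length (u * q') < C.length (u * q) := by
        rw [C.length_jmin_mul hu hmin hq'mem, C.length_jmin_mul hu hmin hq]
        omega
      have heq : u * q = (u * q') * C.s (C.π i) := by
        rw [hq', mul_assoc, mul_assoc, C.s_mul_self (C.simple_mem i), mul_one]
      apply Relation.ReflTransGen.tail hchain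
      exact ⟨⟨C.π i, C.simple_mem i, heq⟩, hstep⟩

/-- the stabilizer of a dominant vector is the parabolic subgroup of simple
reflections fixing it -/
theorem stabilizer_parabolic {σ : V} (hσ : C.IsDominant σ) {g : V ≃ₗ[ℝ] V} (hg : g ∈ C.W)
    (hfix : g σ = σ) : g ∈ C.parabolicSubgroup {i | pairing σ (C.π i) = 0} := by
  set J : Set (Fin C.r) := {i | pairing σ (C.π i) = 0} with hJ
  generalize hn : C.length g = n
  induction n using Nat.strong_induction_on generalizing g with
  | _ n ih =>
    rcases eq_or_ne g 1 with rfl | hne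
    · exact one_mem _
    · obtain ⟨i, hineg, hlen⟩ := C.exists_descent hg hne
      -- pairing σ (π i) = 0
      have h1 : pairing σ (g (C.π i)) = pairing σ (C.π i) := by
        conv_lhs => rw [← hfix]
        exact C.pairing_inv hg σ (C.π i)
      have h2 : pairing σ (g (C.π i)) ≤ 0 := by
        have hmem : g (C.π i) ∈ C.Φ := C.root_stable hg (C.simple_mem i)
        have hnegmem : -(g (C.π i)) ∈ C.Φ := C.neg_root_mem hmem
        have : pairing σ (g (C.π i)) = - pairing σ (-(g (C.π i))) := by
          rw [pairing_neg_right]; ring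
        rw [this]
        have hp : 0 ≤ pairing σ (-(g (C.π i))) := by
          have hin := C.dominant_inner_pos_cone hσ hineg
          have hpos := C.root_inner_pos hnegmem
          have : ⟪σ, -(g (C.π i))⟫_ℝ = ⟪σ, -(g (C.π i))⟫_ℝ := rfl
          unfold pairing
          positivity
        linarith
      have hzero : pairing σ (C.π i) = 0 := le_antisymm (h1 ▸ h2) (hσ i)
      have hiJ : i ∈ J := hzero
      set g' := g * C.s (C.π i) with hg'
      have hg'W : g' ∈ C.W := mul_mem hg (C.simple_s_mem_W i)
      have hg'fix : g' σ = σ := by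
        have : g' σ = g (C.s (C.π i) σ) := rfl
        rw [this, C.s_fix_of_pairing_zero i hzero, hfix]
      have hg'mem : g' ∈ C.parabolicSubgroup J :=
        ih (C.length g') (by omega) hg'W hg'fix rfl
      have : g = g' * C.s (C.π i) := by
        rw [hg', mul_assoc, C.s_mul_self (C.simple_mem i), mul_one]
      rw [this]
      exact mul_mem hg'mem (C.s_mem_parabolic hiJ)

theorem parabolic_stab {σ : V} {J : Set (Fin C.r)} (hJ : ∀ i ∈ J, pairing σ (C.π i) = 0)
    {q : V ≃ₗ[ℝ] V} (hq : q ∈ C.parabolicSubgroup J) : q σ = σ :=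
  C.parabolic_fix hq hJ


end
end RootSystemData

namespace RootSystemData
section


variable {V : Type} [NormedAddCommGroup V] [InnerProductSpace ℝ V] [FiniteDimensional ℝ V]
variable (C : RootSystemData V)

/-- an element of maximal length exists -/
theorem exists_longest : ∃ w₀ ∈ C.W, ∀ g ∈ C.W, C.length g ≤ C.length w₀ := by
  set P : ℕ → Prop := fun n => ∃ g ∈ C.W, C.length g = n with hP
  have h0 : P 0 := ⟨1, one_mem _, C.length_one⟩
  have hbound : ∀ n, P n → n ≤ C.PosRoots.card := by
    rintro n ⟨g, hg, rfl⟩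
    exact C.length_le_card_posRoots hg
  set N := Nat.findGreatest P C.PosRoots.card with hN
  have hPN : P N := Nat.findGreatest_spec (Nat.zero_le _) h0
  obtain ⟨w₀, hw₀, hlen⟩ := hPN
  refine ⟨w₀, hw₀, ?_⟩
  intro g hg
  have h1 : C.length g ≤ N :=
    Nat.le_findGreatest (hbound _ ⟨g, hg, rfl⟩) ⟨g, hg, rfl⟩
  omega

/-- the longest element -/
def w0 : V ≃ₗ[ℝ] V := C.exists_longest.choose

theorem w0_mem : C.w0 ∈ C.W := C.exists_longest.choose_spec.1

theorem w0_max : ∀ g ∈ C.W, C.length g ≤ C.length C.w0 :=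
  C.exists_longest.choose_spec.2

/-- `w₀` sends every positive root to a negative root -/
theorem w0_neg {β : V} (hβ : β ∈ C.Φ) (hpos : C.IsPos β) : C.IsNeg (C.w0 β) := by
  rcases C.root_pos_or_neg (C.root_stable C.w0_mem hβ) with h | h
  · exfalso
    have := C.length_mul_s_gt_of_pos C.w0_mem hβ hpos h
    have h2 := C.w0_max _ (mul_mem C.w0_mem (C.s_mem_W hβ))
    omega
  · exact h

theorem invSet_w0 : C.invSet C.w0 = C.PosRoots := by
  ext β
  rw [C.mem_invSet, mem_posRoots]
  constructor
  · rintro ⟨h1, h2, _⟩; exact ⟨h1, h2⟩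
  · rintro ⟨h1, h2⟩; exact ⟨h1, h2, C.w0_neg h1 h2⟩

theorem length_w0 : C.length C.w0 = C.PosRoots.card := by
  rw [← C.invNum_eq_length C.w0_mem]
  unfold invNum
  rw [C.invSet_w0]

/-- `ℓ(x w₀) = ℓ(w₀) - ℓ(x)` -/
theorem length_mul_w0 {x : V ≃ₗ[ℝ] V} (hx : x ∈ C.W) :
    C.length (x * C.w0) + C.length x = C.PosRoots.card := by
  have hkey : C.invSet (x * C.w0) =
      (C.PosRoots.filter (fun γ => C.IsPos (x γ))).image
        (fun γ => C.w0⁻¹ (-γ)) := by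
    ext β
    rw [C.mem_invSet, Finset.mem_image]
    constructor
    · rintro ⟨hβΦ, hβpos, hβneg⟩
      refine ⟨-(C.w0 β), ?_, ?_⟩
      · rw [Finset.mem_filter, mem_posRoots]
        have h1 : C.w0 β ∈ C.Φ := C.root_stable C.w0_mem hβΦ
        have h2 : C.IsNeg (C.w0 β) := C.w0_neg hβΦ hβpos
        refine ⟨⟨C.neg_root_mem h1, h2⟩, ?_⟩
        rw [map_neg]
        have h3 : (x * C.w0) β = x (C.w0 β) := rfl
        rw [h3] at hβneg
        exact hβneg
      · show C.w0⁻¹ (-(-(C.w0 β))) = β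
        rw [neg_neg]
        exact inv_apply_apply β
    · rintro ⟨γ, hγ, rfl⟩
      rw [Finset.mem_filter, mem_posRoots] at hγ
      obtain ⟨⟨hγΦ, hγpos⟩, hxγ⟩ := hγ
      have hnγ : -γ ∈ C.Φ := C.neg_root_mem hγΦ
      have h1 : C.w0⁻¹ (-γ) ∈ C.Φ := C.root_stable (inv_mem C.w0_mem) hnγ
      have h2 : C.IsPos (C.w0⁻¹ (-γ)) := by
        rcases C.root_pos_or_neg h1 with h | h
        · exact h
        · exfalso
          have h3 : C.IsPos (-(C.w0⁻¹ (-γ))) := h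
          have h4 : -(C.w0⁻¹ (-γ)) ∈ C.Φ := C.neg_root_mem h1
          have h5 := C.w0_neg h4 h3
          simp only [map_neg, apply_inv_apply, neg_neg] at h5
          exact C.root_not_pos_and_neg hγΦ ⟨hγpos, h5⟩
      refine ⟨h1, h2, ?_⟩
      have h3 : (x * C.w0) (C.w0⁻¹ (-γ)) = x (C.w0 (C.w0⁻¹ (-γ))) := rfl
      rw [h3, apply_inv_apply, map_neg]
      simpa [RootSystemData.IsNeg] using hxγ
  have hinj : Set.InjOn (fun γ => C.w0⁻¹ (-γ)) (C.PosRoots.filter (fun γ => C.IsPos (x γ))) := by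
    intro a _ b _ hab
    simp only at hab
    have := congrArg (fun z => -(C.w0 z)) hab
    simpa [apply_inv_apply] using this
  have hcard : C.invNum (x * C.w0) =
      (C.PosRoots.filter (fun γ => C.IsPos (x γ))).card := by
    unfold invNum
    rw [hkey, Finset.card_image_of_injOn hinj]
  have hsplit : (C.PosRoots.filter (fun γ => C.IsPos (x γ))).card + C.invNum x
      = C.PosRoots.card := by
    have hfe : C.invSet x = C.PosRoots.filter (fun γ => ¬ C.IsPos (x γ)) := by
      unfold invSet
      apply Finset.filter_congr
      intro γ hγ
      rw [mem_posRoots] at hγ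
      have hroot : x γ ∈ C.Φ := C.root_stable hx hγ.1
      constructor
      · intro h; simpa using (C.isNeg_iff_not_isPos hroot).1 h
      · intro h; exact (C.isNeg_iff_not_isPos hroot).2 (by simpa using h)
    unfold invNum
    rw [hfe]
    exact Finset.card_filter_add_card_filter_not _
  rw [← C.invNum_eq_length (mul_mem hx C.w0_mem), ← C.invNum_eq_length hx, hcard]
  omega

theorem w0_sq : C.w0 * C.w0 = 1 := by
  have h := C.length_mul_w0 C.w0_mem
  rw [C.length_w0] at h
  have : C.length (C.w0 * C.w0) = 0 := by omega
  exact C.eq_one_of_length_zero (mul_mem C.w0_mem C.w0_mem) this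

theorem w0_inv : C.w0⁻¹ = C.w0 := inv_eq_of_mul_eq_one_right C.w0_sq

theorem w0_w0_apply (v : V) : C.w0 (C.w0 v) = v := by
  have : C.w0 (C.w0 v) = (C.w0 * C.w0) v := rfl
  rw [this, C.w0_sq, one_apply]

/-- Bruhat order reversal by `w₀` -/
theorem bruhat_reverse {a b : V ≃ₗ[ℝ] V} (ha : a ∈ C.W) (hab : C.BruhatLE a b) :
    C.BruhatLE (b * C.w0) (a * C.w0) := by
  induction hab with
  | refl => exact Relation.ReflTransGen.refl
  | tail hac hstep ih =>
      rename_i c b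
      have hcW : c ∈ C.W := C.bruhat_mem_W ha hac
      obtain ⟨⟨α, hα, hb⟩, hlt⟩ := hstep
      have hbW : b ∈ C.W := by rw [hb]; exact mul_mem hcW (C.s_mem_W hα)
      -- step from b w₀ to c w₀
      have hroot : C.w0⁻¹ α ∈ C.Φ := C.root_stable (inv_mem C.w0_mem) hα
      have hconj : C.s (C.w0⁻¹ α) = C.w0⁻¹ * C.s α * C.w0 := by
        have := C.s_conj (inv_mem C.w0_mem) hα
        rw [this, inv_inv]
      have hstep2 : c * C.w0 = (b * C.w0) * C.s (C.w0⁻¹ α) := by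
        rw [hconj, hb]
        calc c * C.w0 = c * (C.s α * C.s α) * C.w0 := by rw [C.s_mul_self hα, mul_one]
        _ = (c * C.s α * C.w0) * (C.w0⁻¹ * C.s α * C.w0) := by group
      have hlen : C.length (b * C.w0) < C.length (c * C.w0) := by
        have h1 := C.length_mul_w0 hcW
        have h2 := C.length_mul_w0 hbW
        omega
      have honestep : C.BruhatLE (b * C.w0) (c * C.w0) :=
        Relation.ReflTransGen.single ⟨⟨C.w0⁻¹ α, hroot, hstep2⟩, hlen⟩
      exact Relation.ReflTransGen.trans honestep ih

/-- `w₀` maps dominant vectors to antidominant ones -/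
theorem w0_antidominant {ν : V} (hν : C.IsDominant ν) : C.IsDominant (-(C.w0 ν)) := by
  intro i
  rw [pairing_neg]
  have h1 : pairing (C.w0 ν) (C.π i) = pairing ν (C.w0⁻¹ (C.π i)) := by
    have := C.pairing_inv (inv_mem C.w0_mem) (C.w0 ν) (C.π i)
    rw [inv_apply_apply] at this
    exact this.symm
  rw [h1]
  have h2 : C.IsNeg (C.w0⁻¹ (C.π i)) := by
    have h3 : C.w0⁻¹ (C.π i) ∈ C.Φ := C.root_stable (inv_mem C.w0_mem) (C.simple_mem i)
    rcases C.root_pos_or_neg h3 with h | h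
    · exfalso
      have h4 := C.w0_neg h3 h
      rw [apply_inv_apply] at h4
      exact C.root_not_pos_and_neg (C.simple_mem i) ⟨C.isPos_simple i, h4⟩
    · exact h
  have h3 : C.w0⁻¹ (C.π i) ∈ C.Φ := C.root_stable (inv_mem C.w0_mem) (C.simple_mem i)
  have h4 : pairing ν (C.w0⁻¹ (C.π i)) = - pairing ν (-(C.w0⁻¹ (C.π i))) := by
    rw [pairing_neg_right]; ring
  rw [h4]
  have h5 : 0 ≤ pairing ν (-(C.w0⁻¹ (C.π i))) := by
    have h6 := C.dominant_inner_pos_cone hν h2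
    have h7 := C.root_inner_pos (C.neg_root_mem h3)
    unfold pairing
    positivity
  linarith

/-- uniqueness of the antidominant representative -/
theorem antidominant_unique {x y : V} (hx : C.IsDominant (-x)) (hy : C.IsDominant (-y))
    {w : V ≃ₗ[ℝ] V} (hw : w ∈ C.W) (heq : y = w x) : y = x := by
  have h1 : -y = w (-x) := by rw [heq, map_neg]
  have := C.dominant_rep_unique hx hy hw h1
  have h2 := congrArg Neg.neg this
  simpa using h2


end
end RootSystemData

namespace RootSystemData
section


variable {V : Type} [NormedAddCommGroup V] [InnerProductSpace ℝ V] [FiniteDimensional ℝ V]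
variable (C : RootSystemData V)

/-- the auxiliary order relation used in the induction -/
def Rrel (x y : V) : Prop :=
  (⟪x, x⟫_ℝ < ⟪y, y⟫_ℝ) ∨
  (x ≠ y ∧ ∃ ν ∈ C.X, C.IsDominant ν ∧ ∃ a ∈ C.W, ∃ b ∈ C.W,
    C.BruhatLE a b ∧ -x = a ν ∧ -y = b ν)

/-- the measures for well-foundedness -/
def mu1 (y : V) : ℕ := {z : V | z ∈ C.X ∧ ⟪z, z⟫_ℝ < ⟪y, y⟫_ℝ}.ncard

def mu2 (y : V) : ℕ :=
  {z : V | z ∈ C.X ∧ ⟪z, z⟫_ℝ = ⟪y, y⟫_ℝ ∧ C.IsPos (y - z) ∧ y ≠ z}.ncard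

theorem mu1_finite (y : V) : {z : V | z ∈ C.X ∧ ⟪z, z⟫_ℝ < ⟪y, y⟫_ℝ}.Finite :=
  (C.X_ball_finite ⟪y, y⟫_ℝ).subset (fun z hz => ⟨hz.1, hz.2.le⟩)

theorem mu2_finite (y : V) :
    {z : V | z ∈ C.X ∧ ⟪z, z⟫_ℝ = ⟪y, y⟫_ℝ ∧ C.IsPos (y - z) ∧ y ≠ z}.Finite :=
  (C.X_ball_finite ⟪y, y⟫_ℝ).subset (fun z hz => ⟨hz.1, hz.2.1.le⟩)

/-- R decreases the lexicographic measure -/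
theorem R_decreasing {x y : V} (hx : x ∈ C.X) (h : C.Rrel x y) :
    C.mu1 x < C.mu1 y ∨ (C.mu1 x = C.mu1 y ∧ C.mu2 x < C.mu2 y) := by
  rcases h with h | ⟨hne, ν, hνX, hνdom, a, haW, b, hbW, hab, hxa, hyb⟩
  · left
    apply Set.ncard_lt_ncard _ (C.mu1_finite y)
    constructor
    · intro z hz
      exact ⟨hz.1, lt_trans hz.2 h⟩
    · intro hcon
      have := hcon ⟨hx, h⟩
      exact lt_irrefl _ this.2
  · -- equal norms
    have hnx : ⟪x, x⟫_ℝ = ⟪ν, ν⟫_ℝ := by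
      have h1 : ⟪-x, -x⟫_ℝ = ⟪a ν, a ν⟫_ℝ := by rw [hxa]
      rw [inner_neg_neg, C.inner_inv haW] at h1
      exact h1
    have hny : ⟪y, y⟫_ℝ = ⟪ν, ν⟫_ℝ := by
      have h1 : ⟪-y, -y⟫_ℝ = ⟪b ν, b ν⟫_ℝ := by rw [hyb]
      rw [inner_neg_neg, C.inner_inv hbW] at h1
      exact h1
    have hnorm : ⟪x, x⟫_ℝ = ⟪y, y⟫_ℝ := by rw [hnx, hny]
    right
    constructor
    · unfold mu1
      congr 1
      ext z
      simp only [Set.mem_setOf_eq, hnorm]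
    · -- dominance drop
      have hyx : C.IsPos (y - x) := by
        have h1 := (C.bruhat_mono haW hab hνdom).2.1
        have h2 : a ν - b ν = y - x := by
          rw [← hxa, ← hyb]; abel
        rwa [h2] at h1
      apply Set.ncard_lt_ncard _ (C.mu2_finite y)
      constructor
      · intro z hz
        obtain ⟨hzX, hzn, hzpos, hzne⟩ := hz
        refine ⟨hzX, by rw [hzn, hnorm], ?_, ?_⟩
        · have : y - z = (y - x) + (x - z) := by abel
          rw [this]
          exact C.isPos_add hyx hzpos
        · intro hcon
          rw [← hcon] at hzpos
          have h0 := C.isPos_pointed hyx (by rw [neg_sub]; exact hzpos)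
          have : y = x := by
            have := sub_eq_zero.mp h0
            exact this
          exact hne this.symm
      · intro hcon
        have hxmem : x ∈ {z : V | z ∈ C.X ∧ ⟪z, z⟫_ℝ = ⟪y, y⟫_ℝ ∧ C.IsPos (y - z) ∧ y ≠ z} :=
          ⟨hx, hnorm, hyx, fun h => hne h.symm⟩
        have := hcon hxmem
        exact this.2.2.2 rfl

/-- conversion from the antipodal excellent order -/
theorem antiLE_to_R {x y : V} (h : C.AntiLE x y) (hne : x ≠ y) : C.Rrel x y := by
  rcases h with h | ⟨ν, hνX, hνdom, w, hwW, z, hzW, hwz, hxw, hyz⟩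
  · left
    rw [inner_neg_neg, inner_neg_neg] at h
    exact h
  · right
    exact ⟨hne, ν, hνX, hνdom, w, hwW, z, hzW, hwz, hxw, hyz⟩

/-- the antipodal order is reflexive on the lattice -/
theorem antiLE_refl {x : V} (hx : x ∈ C.X) : C.AntiLE x x := by
  obtain ⟨g, hgW, hgdom⟩ := C.exists_dominant_rep (neg_mem hx)
  right
  refine ⟨g (-x), C.X_stable g hgW _ (neg_mem hx), hgdom, g⁻¹, inv_mem hgW, g⁻¹, inv_mem hgW,
    Relation.ReflTransGen.refl, ?_, ?_⟩ <;>
  · rw [inv_apply_apply]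

/-! ### the sigma vector -/

/-- the sum of fundamental weights indexed by descents of `v⁻¹` -/
def sigmaW (v : V ≃ₗ[ℝ] V) : V :=
  ∑ i ∈ Finset.univ.filter (fun i => C.IsNeg (v⁻¹ (C.π i))), C.ω i

theorem steinberg_eq (v : V ≃ₗ[ℝ] V) : C.steinberg v = v⁻¹ (C.sigmaW v) := rfl

theorem sigmaW_mem_X (v : V ≃ₗ[ℝ] V) : C.sigmaW v ∈ C.X :=
  AddSubgroup.sum_mem _ fun i _ => C.omega_mem i

theorem pairing_sigmaW (v : V ≃ₗ[ℝ] V) (j : Fin C.r) :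
    pairing (C.sigmaW v) (C.π j) = if C.IsNeg (v⁻¹ (C.π j)) then 1 else 0 := by
  unfold sigmaW
  rw [pairing_sum]
  by_cases hj : C.IsNeg (v⁻¹ (C.π j))
  · rw [Finset.sum_eq_single j]
    · rw [C.pairing_omega, if_pos rfl, if_pos hj]
    · intro k _ hk
      rw [C.pairing_omega]; simp [hk]
    · intro h
      exfalso
      exact h (Finset.mem_filter.2 ⟨Finset.mem_univ _, hj⟩)
  · rw [if_neg hj]
    apply Finset.sum_eq_zero
    intro k hk
    rw [Finset.mem_filter] at hk
    have : k ≠ j := by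
      rintro rfl
      exact hj hk.2
    rw [C.pairing_omega]
    simp [this]

theorem sigmaW_dominant (v : V ≃ₗ[ℝ] V) : C.IsDominant (C.sigmaW v) := by
  intro i
  rw [C.pairing_sigmaW]
  split <;> norm_num

/-- minimal dominant-making element with the zero condition -/
theorem exists_min_v {lam : V} (hlam : lam ∈ C.X) :
    ∃ v ∈ C.W, C.IsDominant (v lam) ∧
      (∀ i, pairing (v lam) (C.π i) = 0 → C.IsPos (v⁻¹ (C.π i))) := by
  set P : ℕ → Prop := fun n => ∃ v ∈ C.W, C.IsDominant (v lam) ∧ C.length v = n with hP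
  have hPne : ∃ n, P n := by
    obtain ⟨g, hgW, hgdom⟩ := C.exists_dominant_rep hlam
    exact ⟨C.length g, g, hgW, hgdom, rfl⟩
  set N := Nat.find hPne with hN
  obtain ⟨v, hvW, hvdom, hvlen⟩ := Nat.find_spec hPne
  refine ⟨v, hvW, hvdom, ?_⟩
  intro i hzero
  by_contra hcon
  have hroot : v⁻¹ (C.π i) ∈ C.Φ := C.root_stable (inv_mem hvW) (C.simple_mem i)
  have hneg : C.IsNeg (v⁻¹ (C.π i)) := by
    rcases C.root_pos_or_neg hroot with h | h
    · exact absurd h hcon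
    · exact h
  set v' := C.s (C.π i) * v with hv'
  have hv'W : v' ∈ C.W := mul_mem (C.simple_s_mem_W i) hvW
  have hv'lam : v' lam = v lam := by
    have h1 : v' lam = C.s (C.π i) (v lam) := rfl
    rw [h1, C.s_fix_of_pairing_zero i hzero]
  have hv'dom : C.IsDominant (v' lam) := by rw [hv'lam]; exact hvdom
  have hv'len : C.length v' < C.length v :=
    (C.length_left_s_lt_iff hvW i).2 hneg
  have := Nat.find_min' hPne ⟨v', hv'W, hv'dom, rfl⟩
  omega

/-- **Main construction**: decomposition `lam = v⁻¹ ν + e_v` with the order property. -/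
theorem main_construction {lam : V} (hlam : lam ∈ C.X) :
    ∃ v ∈ C.W, ∃ ν : V, ν ∈ C.X ∧ C.IsDominant ν ∧
      v⁻¹ ν ∈ C.orbitSet ν ∧
      lam = v⁻¹ ν + C.steinberg v ∧
      (C.steinberg v = lam ∨ C.Rrel (C.steinberg v) lam) ∧
      (∀ μ ∈ C.orbitSet ν, μ + C.steinberg v = lam ∨ C.Rrel (μ + C.steinberg v) lam) := by
  obtain ⟨v, hvW, hvdom, hvzero⟩ := C.exists_min_v hlam
  set σ := C.sigmaW v with hσdef
  have hσdom : C.IsDominant σ := C.sigmaW_dominant v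
  have hσX : σ ∈ C.X := C.sigmaW_mem_X v
  set ν := v lam - σ with hνdef
  have hνX : ν ∈ C.X := AddSubgroup.sub_mem _ (C.X_stable v hvW lam hlam) hσX
  have hvlamX : v lam ∈ C.X := C.X_stable v hvW lam hlam
  have hνdom : C.IsDominant ν := by
    intro i
    rw [hνdef, pairing_sub, C.pairing_sigmaW]
    by_cases hi : C.IsNeg (v⁻¹ (C.π i))
    · rw [if_pos hi]
      -- pairing (v lam) (π i) ≥ 1
      obtain ⟨n, hn⟩ := C.pairing_int hvlamX i
      have h1 : 0 ≤ pairing (v lam) (C.π i) := hvdom i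
      have h2 : pairing (v lam) (C.π i) ≠ 0 := by
        intro h
        have := hvzero i h
        exact C.root_not_pos_and_neg (C.root_stable (inv_mem hvW) (C.simple_mem i))
          ⟨this, hi⟩
      have h3 : (1:ℝ) ≤ pairing (v lam) (C.π i) := by
        rw [hn] at h1 h2 ⊢
        have : (0:ℤ) < n := by
          rcases lt_or_eq_of_le (by exact_mod_cast h1 : (0:ℤ) ≤ n) with h | h
          · exact h
          · exfalso; apply h2; rw [← h]; simp
        exact_mod_cast this
      linarith
    · rw [if_neg hi]
      have := hvdom i
      linarith
  have hlamdecomp : lam = v⁻¹ ν + C.steinberg v := by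
    rw [C.steinberg_eq, hνdef, ← hσdef, map_sub]
    have : v⁻¹ (v lam) = lam := inv_apply_apply lam
    rw [this]
    abel
  have hDdom : C.IsDominant (ν + σ) := by
    intro i
    rw [pairing_add]
    exact add_nonneg (hνdom i) (hσdom i)
  have hDX : ν + σ ∈ C.X := AddSubgroup.add_mem _ hνX hσX
  have hlamD : lam = v⁻¹ (ν + σ) := by
    rw [map_add, hlamdecomp, C.steinberg_eq]
  -- J-minimality of v⁻¹
  set J : Set (Fin C.r) := {i | pairing σ (C.π i) = 0} with hJ
  have hvmin : ∀ i ∈ J, C.IsPos (v⁻¹ (C.π i)) := by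
    intro i hi
    have h1 : pairing σ (C.π i) = 0 := hi
    rw [C.pairing_sigmaW] at h1
    by_cases h : C.IsNeg (v⁻¹ (C.π i))
    · rw [if_pos h] at h1; norm_num at h1
    · rcases C.root_pos_or_neg (C.root_stable (inv_mem hvW) (C.simple_mem i)) with h' | h'
      · exact h'
      · exact absurd h' h
  -- the main estimate for orbit elements
  have hmain : ∀ μ ∈ C.orbitSet ν, μ + C.steinberg v = lam ∨ C.Rrel (μ + C.steinberg v) lam := by
    rintro μ ⟨g, hgW, rfl⟩
    set ev := C.steinberg v with hev
    have hevv : ev = v⁻¹ σ := rfl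
    set u := (v * g)⁻¹ with hu
    have huW : u ∈ C.W := inv_mem (mul_mem hvW hgW)
    have hinner : ⟪g ν, ev⟫_ℝ = ⟪ν, u σ⟫_ℝ := by
      rw [hevv, hu]
      have h1 : ⟪g ν, v⁻¹ σ⟫_ℝ = ⟪v (g ν), σ⟫_ℝ := by
        rw [← C.inner_inv hvW (g ν) (v⁻¹ σ), apply_inv_apply]
      rw [h1]
      have h2 : v (g ν) = (v * g) ν := rfl
      rw [h2, ← C.inner_inv huW ((v*g) ν) σ, hu, inv_apply_apply]
    have hle : ⟪ν, u σ⟫_ℝ ≤ ⟪ν, σ⟫_ℝ := C.inner_dominant_orbit_le hνdom hσdom huW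
    -- norms
    have hnμ : ⟪g ν, g ν⟫_ℝ = ⟪ν, ν⟫_ℝ := C.inner_inv hgW ν ν
    have hnev : ⟪ev, ev⟫_ℝ = ⟪σ, σ⟫_ℝ := by
      rw [hevv]; exact C.inner_inv (inv_mem hvW) σ σ
    have hnlam : ⟪lam, lam⟫_ℝ = ⟪ν, ν⟫_ℝ + 2*⟪ν, σ⟫_ℝ + ⟪σ, σ⟫_ℝ := by
      rw [hlamD, C.inner_inv (inv_mem hvW)]
      rw [inner_add_left, inner_add_right, inner_add_right, real_inner_comm σ ν]
      ring
    have hnterm : ⟪g ν + ev, g ν + ev⟫_ℝ = ⟪ν, ν⟫_ℝ + 2*⟪ν, u σ⟫_ℝ + ⟪σ, σ⟫_ℝ := by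
      have hsymm : ⟪ev, g ν⟫_ℝ = ⟪ν, u σ⟫_ℝ := by
        rw [real_inner_comm]; exact hinner
      rw [inner_add_left, inner_add_right, inner_add_right, hnμ, hnev, hsymm, hinner]
      ring
    rcases lt_or_eq_of_le hle with hlt | heq
    · right
      left
      rw [hnterm, hnlam]
      linarith
    · -- equality: the term lies in the orbit of lam
      obtain ⟨p, q, hpW, hqW, hpν, hqσ, hupq⟩ :=
        C.stab_decomp hνdom hσdom hσX huW (by rw [heq])
      have hgform : g ν = v⁻¹ (q⁻¹ ν) := by
        have h1 : g = v⁻¹ * u⁻¹ := by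
          rw [hu]; group
        have h2 : u⁻¹ = q⁻¹ * p⁻¹ := by rw [hupq]; group
        rw [h1, h2]
        have h3 : (v⁻¹ * (q⁻¹ * p⁻¹)) ν = v⁻¹ (q⁻¹ (p⁻¹ ν)) := rfl
        rw [h3]
        have hp' : p⁻¹ ν = ν := by
          have := congrArg (fun z => p⁻¹ z) hpν
          simpa [inv_apply_apply] using this.symm
        rw [hp']
      have hterm_eq : g ν + ev = v⁻¹ (q⁻¹ (ν + σ)) := by
        rw [hgform, hevv, map_add, map_add]
        have hq' : q⁻¹ σ = σ := by
          have := congrArg (fun z => q⁻¹ z) hqσ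
          simpa [inv_apply_apply] using this.symm
        rw [hq']
      rcases eq_or_ne (g ν + ev) lam with h | hne
      · exact Or.inl h
      · right
        right
        refine ⟨hne, -(C.w0 (ν + σ)), ?_, C.w0_antidominant hDdom,
          v⁻¹ * q⁻¹ * C.w0, ?_, v⁻¹ * C.w0, ?_, ?_, ?_, ?_⟩
        · exact neg_mem (C.X_stable _ C.w0_mem _ hDX)
        · exact mul_mem (mul_mem (inv_mem hvW) (inv_mem hqW)) C.w0_mem
        · exact mul_mem (inv_mem hvW) C.w0_mem
        · -- Bruhat: reverse of v⁻¹ ≤ v⁻¹ q⁻¹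
          have hq1 : q ∈ C.parabolicSubgroup J := by
            rw [hJ]
            exact C.stabilizer_parabolic hσdom hqW hqσ
          have hchain : C.BruhatLE v⁻¹ (v⁻¹ * q⁻¹) :=
            C.bruhat_jmin_le (inv_mem hvW) hvmin (inv_mem hq1)
          have := C.bruhat_reverse (inv_mem hvW) hchain
          exact this
        · -- a ν̃ = -(term)
          have h1 : (v⁻¹ * q⁻¹ * C.w0) (-(C.w0 (ν + σ))) =
              v⁻¹ (q⁻¹ (C.w0 (-(C.w0 (ν + σ))))) := rfl
          rw [h1, map_neg, C.w0_w0_apply, map_neg, map_neg, hterm_eq]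
        · have h1 : (v⁻¹ * C.w0) (-(C.w0 (ν + σ))) = v⁻¹ (C.w0 (-(C.w0 (ν + σ)))) := rfl
          rw [h1, map_neg, C.w0_w0_apply, map_neg, hlamD]
  refine ⟨v, hvW, ν, hνX, hνdom, ⟨v⁻¹, inv_mem hvW, rfl⟩, hlamdecomp, ?_, hmain⟩
  -- steinberg v vs lam
  rcases eq_or_ne ν 0 with hν0 | hν0
  · left
    rw [hlamdecomp, hν0, map_zero, zero_add]
  · right
    left
    have hν2 : 0 < ⟪ν, ν⟫_ℝ := by
      have h2 : 0 < ‖ν‖ := norm_pos_iff.mpr hν0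
      have h3 : ⟪ν, ν⟫_ℝ = ‖ν‖ * ‖ν‖ := real_inner_self_eq_norm_mul_norm ν
      rw [h3]; exact mul_pos h2 h2
    have hnev : ⟪C.steinberg v, C.steinberg v⟫_ℝ = ⟪σ, σ⟫_ℝ := by
      rw [C.steinberg_eq]; exact C.inner_inv (inv_mem hvW) σ σ
    have hnlam : ⟪lam, lam⟫_ℝ = ⟪ν, ν⟫_ℝ + 2*⟪ν, σ⟫_ℝ + ⟪σ, σ⟫_ℝ := by
      rw [hlamD, C.inner_inv (inv_mem hvW)]
      rw [inner_add_left, inner_add_right, inner_add_right, real_inner_comm σ ν]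
      ring
    have hνσ : 0 ≤ ⟪ν, σ⟫_ℝ := C.dominant_inner_dominant hνdom hσdom
    rw [hnev, hnlam]
    linarith


end
end RootSystemData

namespace RootSystemData
section


variable {V : Type} [NormedAddCommGroup V] [InnerProductSpace ℝ V] [FiniteDimensional ℝ V]
variable (C : RootSystemData V)

/-- `actX` as an additive monoid homomorphism -/
def actXHom (g : V ≃ₗ[ℝ] V) (hg : g ∈ C.W) : ↥C.X →+ ↥C.X where
  toFun := C.actX g hg
  map_zero' := by
    apply Subtype.ext
    show g (0:V) = (0:V)
    exact map_zero g
  map_add' := fun x y => by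
    apply Subtype.ext
    show g ((x:V) + (y:V)) = g (x:V) + g (y:V)
    exact map_add g _ _

theorem wAct_eq_ringHom (g : V ≃ₗ[ℝ] V) (hg : g ∈ C.W) (m : C.GroupRing) :
    C.wAct g hg m = AddMonoidAlgebra.mapDomainRingHom ℤ (C.actXHom g hg) m := rfl

theorem wAct_mul (g : V ≃ₗ[ℝ] V) (hg : g ∈ C.W) (x y : C.GroupRing) :
    C.wAct g hg (x * y) = C.wAct g hg x * C.wAct g hg y := by
  rw [wAct_eq_ringHom, wAct_eq_ringHom, wAct_eq_ringHom, map_mul]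

theorem wAct_add (g : V ≃ₗ[ℝ] V) (hg : g ∈ C.W) (x y : C.GroupRing) :
    C.wAct g hg (x + y) = C.wAct g hg x + C.wAct g hg y := by
  rw [wAct_eq_ringHom, wAct_eq_ringHom, wAct_eq_ringHom, map_add]

theorem wAct_neg (g : V ≃ₗ[ℝ] V) (hg : g ∈ C.W) (x : C.GroupRing) :
    C.wAct g hg (-x) = -(C.wAct g hg x) := by
  rw [wAct_eq_ringHom, wAct_eq_ringHom, map_neg]

theorem wAct_sub (g : V ≃ₗ[ℝ] V) (hg : g ∈ C.W) (x y : C.GroupRing) :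
    C.wAct g hg (x - y) = C.wAct g hg x - C.wAct g hg y := by
  rw [wAct_eq_ringHom, wAct_eq_ringHom, wAct_eq_ringHom, map_sub]

theorem wAct_sum (g : V ≃ₗ[ℝ] V) (hg : g ∈ C.W) {ι : Type*} (s : Finset ι)
    (f : ι → C.GroupRing) :
    C.wAct g hg (∑ i ∈ s, f i) = ∑ i ∈ s, C.wAct g hg (f i) := by
  rw [wAct_eq_ringHom, map_sum]
  rfl

theorem wAct_single (g : V ≃ₗ[ℝ] V) (hg : g ∈ C.W) (z : ↥C.X) (a : ℤ) :
    C.wAct g hg (AddMonoidAlgebra.single z a) =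
      AddMonoidAlgebra.single (C.actX g hg z) a := by
  unfold wAct
  exact AddMonoidAlgebra.mapDomain_single (f := C.actX g hg)

/-- invariance is closed under ring operations -/
theorem isWInvariant_zero : C.IsWInvariant 0 := by
  intro g hg
  unfold wAct
  simp

theorem isWInvariant_single_zero (a : ℤ) :
    C.IsWInvariant (AddMonoidAlgebra.single (0 : ↥C.X) a) := by
  intro g hg
  rw [C.wAct_single]
  congr 1
  apply Subtype.ext
  show g (0:V) = (0:V)
  exact map_zero g

theorem isWInvariant_one : C.IsWInvariant 1 := C.isWInvariant_single_zero 1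

theorem isWInvariant_add {x y : C.GroupRing} (hx : C.IsWInvariant x) (hy : C.IsWInvariant y) :
    C.IsWInvariant (x + y) := by
  intro g hg
  rw [C.wAct_add, hx g hg, hy g hg]

theorem isWInvariant_mul {x y : C.GroupRing} (hx : C.IsWInvariant x) (hy : C.IsWInvariant y) :
    C.IsWInvariant (x * y) := by
  intro g hg
  rw [C.wAct_mul, hx g hg, hy g hg]

theorem isWInvariant_neg {x : C.GroupRing} (hx : C.IsWInvariant x) :
    C.IsWInvariant (-x) := by
  intro g hg
  rw [C.wAct_neg, hx g hg]

/-- the orbit of a lattice element, as a finset of the lattice -/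
def orbX {ν : V} (hν : ν ∈ C.X) : Finset ↥C.X :=
  ((C.orbitSet_finite hν).toFinset).subtype (fun x => x ∈ C.X)

theorem mem_orbX {ν : V} (hν : ν ∈ C.X) (z : ↥C.X) :
    z ∈ C.orbX hν ↔ (z : V) ∈ C.orbitSet ν := by
  unfold orbX
  rw [Finset.mem_subtype, Set.Finite.mem_toFinset]

/-- the orbit sum -/
def orbSum {ν : V} (hν : ν ∈ C.X) : C.GroupRing :=
  ∑ z ∈ C.orbX hν, AddMonoidAlgebra.single z 1

theorem orbSum_invariant {ν : V} (hν : ν ∈ C.X) : C.IsWInvariant (C.orbSum hν) := by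
  intro g hg
  unfold orbSum
  rw [C.wAct_sum]
  have h1 : ∀ z ∈ C.orbX hν, C.wAct g hg (AddMonoidAlgebra.single z 1)
      = AddMonoidAlgebra.single (C.actX g hg z) 1 := fun z _ => C.wAct_single g hg z 1
  rw [Finset.sum_congr rfl h1]
  apply Finset.sum_nbij' (i := fun z => C.actX g hg z) (j := fun z => C.actX g⁻¹ (inv_mem hg) z)
  · intro z hz
    rw [C.mem_orbX] at hz ⊢
    exact C.orbitSet_stable hz hg
  · intro z hz
    rw [C.mem_orbX] at hz ⊢
    exact C.orbitSet_stable hz (inv_mem hg)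
  · intro z _
    apply Subtype.ext
    show g⁻¹ (g (z:V)) = (z:V)
    exact inv_apply_apply _
  · intro z _
    apply Subtype.ext
    show g (g⁻¹ (z:V)) = (z:V)
    exact apply_inv_apply _
  · intro z _
    rfl

theorem orbSum_mul_single {ν : V} (hν : ν ∈ C.X) (e : ↥C.X) :
    C.orbSum hν * AddMonoidAlgebra.single e 1 =
      ∑ z ∈ C.orbX hν, AddMonoidAlgebra.single (z + e) 1 := by
  unfold orbSum
  rw [Finset.sum_mul]
  congr 1
  ext z
  rw [AddMonoidAlgebra.single_mul_single, mul_one]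

/-! ### spans -/

/-- membership in the `ℤ[X]^W`-span of the subfamily of `m` satisfying `P` -/
def SpanWith (P : (V ≃ₗ[ℝ] V) → Prop) (m : (V ≃ₗ[ℝ] V) → C.GroupRing)
    (x : C.GroupRing) : Prop :=
  ∃ (F : Finset (V ≃ₗ[ℝ] V)) (c : (V ≃ₗ[ℝ] V) → C.GroupRing),
    (∀ v ∈ F, P v ∧ v ∈ C.W ∧ C.IsWInvariant (c v)) ∧ x = ∑ v ∈ F, c v * m v

theorem spanWith_zero (P) (m : (V ≃ₗ[ℝ] V) → C.GroupRing) : C.SpanWith P m 0 :=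
  ⟨∅, fun _ => 0, by simp, by simp⟩

theorem spanWith_gen {P} (m : (V ≃ₗ[ℝ] V) → C.GroupRing) {v : V ≃ₗ[ℝ] V} (hv : v ∈ C.W)
    (hP : P v) : C.SpanWith P m (m v) := by
  refine ⟨{v}, fun _ => 1, ?_, by simp⟩
  intro w hw
  rw [Finset.mem_singleton] at hw
  subst hw
  exact ⟨hP, hv, C.isWInvariant_one⟩

theorem spanWith_add {P} {m : (V ≃ₗ[ℝ] V) → C.GroupRing} {x y : C.GroupRing}
    (hx : C.SpanWith P m x) (hy : C.SpanWith P m y) : C.SpanWith P m (x + y) := by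
  obtain ⟨F1, c1, h1, rfl⟩ := hx
  obtain ⟨F2, c2, h2, rfl⟩ := hy
  refine ⟨F1 ∪ F2,
    fun v => (if v ∈ F1 then c1 v else 0) + (if v ∈ F2 then c2 v else 0), ?_, ?_⟩
  · intro v hv
    have hPv : P v ∧ v ∈ C.W := by
      rcases Finset.mem_union.1 hv with h | h
      · exact ⟨(h1 v h).1, (h1 v h).2.1⟩
      · exact ⟨(h2 v h).1, (h2 v h).2.1⟩
    refine ⟨hPv.1, hPv.2, ?_⟩
    apply C.isWInvariant_add
    · split
      · rename_i h1'
        exact (h1 v h1').2.2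
      · exact C.isWInvariant_zero
    · split
      · rename_i h2'
        exact (h2 v h2').2.2
      · exact C.isWInvariant_zero
  · have hexp : ∀ v ∈ F1 ∪ F2,
        ((if v ∈ F1 then c1 v else 0) + (if v ∈ F2 then c2 v else 0)) * m v
        = (if v ∈ F1 then c1 v * m v else 0) + (if v ∈ F2 then c2 v * m v else 0) := by
      intro v _
      rw [add_mul]
      congr 1 <;> split <;> simp
    rw [Finset.sum_congr rfl hexp, Finset.sum_add_distrib,
      Finset.sum_ite_mem, Finset.sum_ite_mem,
      Finset.inter_eq_right.mpr Finset.subset_union_left,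
      Finset.inter_eq_right.mpr Finset.subset_union_right]

theorem spanWith_invMul {P} {m : (V ≃ₗ[ℝ] V) → C.GroupRing} {x f : C.GroupRing}
    (hf : C.IsWInvariant f) (hx : C.SpanWith P m x) : C.SpanWith P m (f * x) := by
  obtain ⟨F, c, h, rfl⟩ := hx
  refine ⟨F, fun v => f * c v, ?_, ?_⟩
  · intro v hv
    exact ⟨(h v hv).1, (h v hv).2.1, C.isWInvariant_mul hf (h v hv).2.2⟩
  · rw [Finset.mul_sum]
    congr 1
    ext v
    rw [mul_assoc]

theorem spanWith_neg {P} {m : (V ≃ₗ[ℝ] V) → C.GroupRing} {x : C.GroupRing}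
    (hx : C.SpanWith P m x) : C.SpanWith P m (-x) := by
  have h1 : -x = (-1 : C.GroupRing) * x := by ring
  rw [h1]
  exact C.spanWith_invMul (C.isWInvariant_neg C.isWInvariant_one) hx

theorem spanWith_sub {P} {m : (V ≃ₗ[ℝ] V) → C.GroupRing} {x y : C.GroupRing}
    (hx : C.SpanWith P m x) (hy : C.SpanWith P m y) : C.SpanWith P m (x - y) := by
  have : x - y = x + (-y) := by ring
  rw [this]
  exact C.spanWith_add hx (C.spanWith_neg hy)

theorem spanWith_sum {P} {m : (V ≃ₗ[ℝ] V) → C.GroupRing} {ι : Type*} (s : Finset ι)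
    (f : ι → C.GroupRing) (h : ∀ i ∈ s, C.SpanWith P m (f i)) :
    C.SpanWith P m (∑ i ∈ s, f i) := by
  classical
  induction s using Finset.induction with
  | empty => simpa using C.spanWith_zero P m
  | insert a s' hni ih =>
      rw [Finset.sum_insert hni]
      exact C.spanWith_add (h a (Finset.mem_insert_self a s'))
        (ih (fun i hi => h i (Finset.mem_insert_of_mem hi)))

theorem spanWith_intMul {P} {m : (V ≃ₗ[ℝ] V) → C.GroupRing} {x : C.GroupRing} (a : ℤ)
    (hx : C.SpanWith P m x) :
    C.SpanWith P m ((AddMonoidAlgebra.single (0 : ↥C.X) a) * x) :=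
  C.spanWith_invMul (C.isWInvariant_single_zero a) hx

theorem spanWith_mono {P Q : (V ≃ₗ[ℝ] V) → Prop} {m : (V ≃ₗ[ℝ] V) → C.GroupRing}
    {x : C.GroupRing} (hPQ : ∀ v, P v → Q v) (hx : C.SpanWith P m x) :
    C.SpanWith Q m x := by
  obtain ⟨F, c, h, rfl⟩ := hx
  exact ⟨F, c, fun v hv => ⟨hPQ v (h v hv).1, (h v hv).2.1, (h v hv).2.2⟩, rfl⟩

/-- scalar times a single basis vector -/
theorem single_eq_intMul (z : ↥C.X) (a : ℤ) :
    (AddMonoidAlgebra.single z a : C.GroupRing) =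
      (AddMonoidAlgebra.single (0 : ↥C.X) a) * AddMonoidAlgebra.single z 1 := by
  rw [AddMonoidAlgebra.single_mul_single, zero_add, mul_one]


end
end RootSystemData

namespace RootSystemData
section


variable {V : Type} [NormedAddCommGroup V] [InnerProductSpace ℝ V] [FiniteDimensional ℝ V]
variable (C : RootSystemData V)

/-- the lexicographic measure order -/
def mlex (x y : V) : Prop :=
  C.mu1 x < C.mu1 y ∨ (C.mu1 x = C.mu1 y ∧ C.mu2 x < C.mu2 y)

theorem mlex_trans {x y z : V} (h1 : C.mlex x y) (h2 : C.mlex y z) : C.mlex x z := by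
  unfold mlex at *
  omega

theorem rrel_mlex {x y : V} (hx : x ∈ C.X) (h : C.Rrel x y) : C.mlex x y :=
  C.R_decreasing hx h

/-- restriction of R to the lattice -/
def RX (a b : ↥C.X) : Prop := C.Rrel (a : V) (b : V)

theorem rtg_RX_mlex {a b : ↥C.X} (h : Relation.ReflTransGen C.RX a b) :
    a = b ∨ C.mlex (a : V) (b : V) := by
  induction h with
  | refl => exact Or.inl rfl
  | tail hab hbc ih =>
      rename_i c b
      have h2 : C.mlex (c : V) (b : V) := C.rrel_mlex c.2 hbc
      rcases ih with rfl | h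
      · exact Or.inr h2
      · exact Or.inr (C.mlex_trans h h2)

/-- well-founded induction along the measure -/
theorem mlex_induction (P : ↥C.X → Prop)
    (step : ∀ lam : ↥C.X, (∀ κ : ↥C.X, C.mlex (κ : V) (lam : V) → P κ) → P lam) :
    ∀ lam, P lam := by
  have main : ∀ n m : ℕ, ∀ lam : ↥C.X, C.mu1 (lam : V) = n → C.mu2 (lam : V) = m → P lam := by
    intro n
    induction n using Nat.strong_induction_on with
    | _ n ihn =>
      intro m
      induction m using Nat.strong_induction_on with
      | _ m ihm =>
        intro lam h1 h2
        apply step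
        intro κ hκ
        rcases hκ with h | ⟨he, hl⟩
        · exact ihn (C.mu1 (κ:V)) (by omega) (C.mu2 (κ:V)) κ rfl rfl
        · exact ihm (C.mu2 (κ:V)) (by omega) κ (by omega) rfl
  intro lam
  exact main (C.mu1 (lam:V)) (C.mu2 (lam:V)) lam rfl rfl

theorem coeff_single (z w : ↥C.X) (a : ℤ) :
    C.coeff (AddMonoidAlgebra.single z a) w = if z = w then a else 0 :=
  Finsupp.single_apply

theorem expoOf_eq_single {v : V ≃ₗ[ℝ] V} (hv : v ∈ C.W) :
    C.expoOf (C.steinberg v) =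
      AddMonoidAlgebra.single (⟨C.steinberg v, C.steinberg_mem hv⟩ : ↥C.X) 1 := by
  unfold expoOf expo
  rw [dif_pos (C.steinberg_mem hv)]

/-- decomposition of an element of the group ring into singles -/
theorem groupRing_sum_single (x : C.GroupRing) :
    x = ∑ κ ∈ x.coeff.support, AddMonoidAlgebra.single κ (x.coeff κ) := by
  conv_lhs => rw [← AddMonoidAlgebra.ofCoeff_coeff x, ← Finsupp.sum_single x.coeff]
  rw [Finsupp.sum, AddMonoidAlgebra.ofCoeff_sum]
  rfl


end
end RootSystemData

namespace RootSystemData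
section


variable {V : Type} [NormedAddCommGroup V] [InnerProductSpace ℝ V] [FiniteDimensional ℝ V]
variable (C : RootSystemData V)

theorem steinberg_span : ∀ lam : ↥C.X,
    C.SpanWith
      (fun v => ∃ h : C.steinberg v ∈ C.X,
        Relation.ReflTransGen C.RX ⟨C.steinberg v, h⟩ lam)
      (fun v => C.expoOf (C.steinberg v))
      (AddMonoidAlgebra.single lam 1) := by
  apply C.mlex_induction
  intro lam IH
  obtain ⟨v, hvW, ν, hνX, hνdom, hvνorb, hdecomp, hsv, hmain⟩ := C.main_construction lam.2
  set e : ↥C.X := ⟨C.steinberg v, C.steinberg_mem hvW⟩ with he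
  set z0 : ↥C.X := ⟨v⁻¹ ν, C.X_stable _ (inv_mem hvW) ν hνX⟩ with hz0
  have hz0mem : z0 ∈ C.orbX hνX := by rw [C.mem_orbX]; exact hvνorb
  have hz0e : z0 + e = lam := by
    apply Subtype.ext
    show (v⁻¹ ν : V) + C.steinberg v = (lam : V)
    exact hdecomp.symm
  have hPv : ∃ h : C.steinberg v ∈ C.X,
      Relation.ReflTransGen C.RX ⟨C.steinberg v, h⟩ lam := by
    refine ⟨C.steinberg_mem hvW, ?_⟩
    rcases hsv with h | h
    · have h2 : (⟨C.steinberg v, C.steinberg_mem hvW⟩ : ↥C.X) = lam := Subtype.ext h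
      rw [h2]
    · exact Relation.ReflTransGen.single h
  have hid : AddMonoidAlgebra.single lam (1:ℤ) =
      C.orbSum hνX * C.expoOf (C.steinberg v)
        - ∑ z ∈ (C.orbX hνX).erase z0, AddMonoidAlgebra.single (z + e) 1 := by
    rw [C.expoOf_eq_single hvW, ← he, C.orbSum_mul_single,
      ← Finset.add_sum_erase _ _ hz0mem, hz0e]
    abel
  rw [hid]
  apply C.spanWith_sub
  · exact C.spanWith_invMul (C.orbSum_invariant hνX)
      (C.spanWith_gen (fun w => C.expoOf (C.steinberg w)) hvW hPv)
  · apply C.spanWith_sum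
    intro z hz
    have hzorb : (z : V) ∈ C.orbitSet ν := by
      rw [← C.mem_orbX hνX]
      exact Finset.mem_of_mem_erase hz
    have hzne : z ≠ z0 := Finset.ne_of_mem_erase hz
    rcases hmain (z:V) hzorb with h | h
    · exfalso
      apply hzne
      apply Subtype.ext
      show (z : V) = (v⁻¹ ν : V)
      have h2 : (z : V) + C.steinberg v = (v⁻¹ ν : V) + C.steinberg v := by
        rw [h, hdecomp]
      exact add_right_cancel h2
    · have hκR : C.Rrel ((z + e : ↥C.X) : V) (lam : V) := h
      have hml : C.mlex ((z + e : ↥C.X) : V) (lam : V) := C.rrel_mlex (z+e).2 hκR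
      have hIH := IH (z + e) hml
      apply C.spanWith_mono _ hIH
      intro w hw
      obtain ⟨hmem, hchain⟩ := hw
      exact ⟨hmem, Relation.ReflTransGen.tail hchain hκR⟩


end
end RootSystemData

namespace RootSystemData
section


variable {V : Type} [NormedAddCommGroup V] [InnerProductSpace ℝ V] [FiniteDimensional ℝ V]
variable (C : RootSystemData V)

theorem main_span (m : (V ≃ₗ[ℝ] V) → C.GroupRing)
    (hcoeff : ∀ v (hv : v ∈ C.W), C.coeff (m v) ⟨C.steinberg v, C.steinberg_mem hv⟩ = 1)
    (hsupp : ∀ v ∈ C.W, ∀ μ ∈ C.supp (m v), C.AntiLE (μ : V) (C.steinberg v)) :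
    ∀ lam : ↥C.X, C.SpanWith (fun _ => True) m (AddMonoidAlgebra.single lam 1) := by
  apply C.mlex_induction
  intro lam IH
  obtain ⟨F, c, hF, hsum⟩ := C.steinberg_span lam
  rw [hsum]
  apply C.spanWith_sum
  intro v hvF
  obtain ⟨⟨hmem, hchain⟩, hvW, hinv⟩ := hF v hvF
  set e : ↥C.X := ⟨C.steinberg v, C.steinberg_mem hvW⟩ with he
  have hchain' : Relation.ReflTransGen C.RX e lam := hchain
  have hc1 : (m v).coeff e = 1 := hcoeff v hvW
  have hesupp : e ∈ C.supp (m v) := by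
    unfold supp
    rw [Finsupp.mem_support_iff, hc1]
    norm_num
  have hmv : m v = AddMonoidAlgebra.single e 1
      + ∑ κ ∈ (C.supp (m v)).erase e,
          AddMonoidAlgebra.single κ ((m v).coeff κ) := by
    conv_lhs => rw [C.groupRing_sum_single (m v)]
    have h2 : C.supp (m v) = (m v).coeff.support := rfl
    rw [← h2, ← Finset.add_sum_erase _ _ hesupp, hc1]
  have hexpo : C.expoOf (C.steinberg v) = m v
      - ∑ κ ∈ (C.supp (m v)).erase e,
          AddMonoidAlgebra.single κ ((m v).coeff κ) := by
    rw [C.expoOf_eq_single hvW, ← he, eq_sub_iff_add_eq]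
    exact hmv.symm
  have hprod : c v * C.expoOf (C.steinberg v) = c v * m v
      - ∑ κ ∈ (C.supp (m v)).erase e,
          c v * AddMonoidAlgebra.single κ ((m v).coeff κ) := by
    rw [hexpo, mul_sub, Finset.mul_sum]
  rw [hprod]
  apply C.spanWith_sub
  · exact C.spanWith_invMul hinv (C.spanWith_gen m hvW trivial)
  · apply C.spanWith_sum
    intro κ hκ
    have hκsupp : κ ∈ C.supp (m v) := Finset.mem_of_mem_erase hκ
    have hκne : (κ : V) ≠ C.steinberg v :=
      fun h => (Finset.ne_of_mem_erase hκ) (Subtype.ext h)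
    have hA : C.AntiLE (κ : V) (C.steinberg v) := hsupp v hvW κ hκsupp
    have hR : C.Rrel (κ : V) (C.steinberg v) := C.antiLE_to_R hA hκne
    have h1 : C.mlex (κ : V) (C.steinberg v) := C.rrel_mlex κ.2 hR
    have hml : C.mlex (κ : V) (lam : V) := by
      rcases C.rtg_RX_mlex hchain' with h2 | h2
      · have h3 : (C.steinberg v : V) = (lam : V) := by
          rw [← h2]
        rw [← h3]
        exact h1
      · exact C.mlex_trans h1 h2
    have hIH := IH κ hml
    have hrw : c v * AddMonoidAlgebra.single κ ((m v).coeff κ)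
        = (c v * AddMonoidAlgebra.single (0 : ↥C.X) ((m v).coeff κ))
            * AddMonoidAlgebra.single κ 1 := by
      rw [C.single_eq_intMul, ← mul_assoc]
    rw [hrw]
    exact C.spanWith_invMul
      (C.isWInvariant_mul hinv (C.isWInvariant_single_zero _)) hIH

theorem final_span (m : (V ≃ₗ[ℝ] V) → C.GroupRing)
    (hcoeff : ∀ v (hv : v ∈ C.W), C.coeff (m v) ⟨C.steinberg v, C.steinberg_mem hv⟩ = 1)
    (hsupp : ∀ v ∈ C.W, ∀ μ ∈ C.supp (m v), C.AntiLE (μ : V) (C.steinberg v))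
    (x : C.GroupRing) :
    ∃ (F : Finset (V ≃ₗ[ℝ] V)) (c : (V ≃ₗ[ℝ] V) → C.GroupRing),
      (∀ v ∈ F, v ∈ C.W ∧ C.IsWInvariant (c v)) ∧ x = ∑ v ∈ F, c v * m v := by
  have hall := C.main_span m hcoeff hsupp
  have hx : C.SpanWith (fun _ => True) m x := by
    rw [C.groupRing_sum_single x]
    apply C.spanWith_sum
    intro κ _
    rw [C.single_eq_intMul]
    exact C.spanWith_intMul _ (hall κ)
  obtain ⟨F, c, hF, hsum⟩ := hx
  exact ⟨F, c, fun v hv => ⟨(hF v hv).2.1, (hF v hv).2.2⟩, hsum⟩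


end
end RootSystemData
/-- If for each `v ∈ W` an element `m_v ∈ ℤ[X]` is given whose coefficient
at `e^{e_v}` is `1` and whose support is contained in `{μ : μ ≤ₐ e_v}`, then the family
`{m_v}` generates `ℤ[X]` as a module over the invariant subring `ℤ[X]^W`.  In particular,
the `e^{e_v}` generate `ℤ[X]` as a `ℤ[X]^W`-module (Steinberg's theorem). -/
theorem statement_0
    {V : Type} [NormedAddCommGroup V] [InnerProductSpace ℝ V] [FiniteDimensional ℝ V]
    (C : RootSystemData V)
    (m : (V ≃ₗ[ℝ] V) → C.GroupRing)
    (hcoeff : ∀ v (hv : v ∈ C.W), C.coeff (m v) ⟨C.steinberg v, C.steinberg_mem hv⟩ = 1)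
    (hsupp : ∀ v ∈ C.W, ∀ μ ∈ C.supp (m v), C.AntiLE (μ : V) (C.steinberg v)) :
    (∀ x : C.GroupRing, ∃ (F : Finset (V ≃ₗ[ℝ] V)) (c : (V ≃ₗ[ℝ] V) → C.GroupRing),
        (∀ v ∈ F, v ∈ C.W ∧ C.IsWInvariant (c v)) ∧ x = ∑ v ∈ F, c v * m v) ∧
    (∀ x : C.GroupRing, ∃ (F : Finset (V ≃ₗ[ℝ] V)) (c : (V ≃ₗ[ℝ] V) → C.GroupRing),
        (∀ v ∈ F, v ∈ C.W ∧ C.IsWInvariant (c v)) ∧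
        x = ∑ v ∈ F, c v * C.expoOf (C.steinberg v)) := by

  constructor
  · intro x
    exact C.final_span m hcoeff hsupp x
  · intro x
    have hcoeff' : ∀ v (hv : v ∈ C.W),
        C.coeff (C.expoOf (C.steinberg v)) ⟨C.steinberg v, C.steinberg_mem hv⟩ = 1 := by
      intro v hv
      rw [C.expoOf_eq_single hv, C.coeff_single]
      simp
    have hsupp' : ∀ v ∈ C.W, ∀ μ ∈ C.supp (C.expoOf (C.steinberg v)),
        C.AntiLE (μ : V) (C.steinberg v) := by
      intro v hv μ hμ
      rw [C.expoOf_eq_single hv] at hμ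
      unfold RootSystemData.supp at hμ
      rw [AddMonoidAlgebra.coeff_single] at hμ
      rw [Finsupp.support_single_ne_zero _ (by norm_num)] at hμ
      rw [Finset.mem_singleton] at hμ
      subst hμ
      exact C.antiLE_refl (C.steinberg_mem hv)
    exact C.final_span _ hcoeff' hsupp' x
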